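/- arXiv:2507.04797 — 8 statements merged into one kernel-verified Lean document; each statement's English description precedes it below -/
import Mathlib

section
/- Let q ≥ 2, n ≥ 1, x ∈ Σ_q^n and 1 ≤ i ≤ n, and let x′ ∈ Σ_q^{n−1} be obtained from x by deleting the i-th symbol, i.e. x′ = x_{[1,i−1]} x_{[i+1,n]}. Let y = ψ(x) ∈ Σ_q^{n+1} and y′ = ψ(x′) ∈ Σ_q^n. Then y′ is obtained from y by replacing the two symbols y_i y_{i+1} with the single symbol (y_i + y_{i+1}) mod q; that is, y′_k = y_k for 1 ≤ k < i, y′_i = (y_i + y_{i+1}) mod q, and y′_k = y_{k+1} for i < k ≤ n. -/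
/-- The symbol `x_k` (1-based index), with the convention `x_0 = x_{n+1} = 0`. -/
def xpad {q n : ℕ} (x : Fin n → ZMod q) (k : ℕ) : ZMod q :=
  if h : 1 ≤ k ∧ k ≤ n then x ⟨k - 1, by omega⟩ else 0

/-- The differential sequence `ψ(x) ∈ Σ_q^{n+1}`: `ψ(x)_i = (x_{i-1} - x_i) mod q`
(1-based), with `x_0 = x_{n+1} = 0`.  Index `j : Fin (n+1)` is 1-based position `j+1`. -/
def psi {q n : ℕ} (x : Fin n → ZMod q) : Fin (n + 1) → ZMod q :=
  fun j => xpad x (j : ℕ) - xpad x ((j : ℕ) + 1)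

/-- Delete the symbol at 1-based position `i` from `x`, giving a sequence of length `n-1`.
Index `j : Fin (n-1)` is 1-based position `j+1`. -/
def deleteAt {q n : ℕ} (x : Fin n → ZMod q) (i : ℕ) : Fin (n - 1) → ZMod q :=
  fun j => if (j : ℕ) + 1 < i then x ⟨(j : ℕ), by omega⟩ else x ⟨(j : ℕ) + 1, by omega⟩

lemma xpad_del {q n : ℕ} (x : Fin n → ZMod q) (i : ℕ) (hi1 : 1 ≤ i) (hin : i ≤ n) (k : ℕ) :
    xpad (deleteAt x i) k = if k < i then xpad x k else xpad x (k + 1) := by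
  simp only [xpad, deleteAt, Fin.val_mk]
  by_cases h1 : 1 ≤ k ∧ k ≤ n - 1
  · rw [dif_pos h1]
    by_cases h2 : k < i
    · rw [if_pos h2, if_pos (by omega), dif_pos (by omega)]
    · rw [if_neg h2, if_neg (by omega), dif_pos (by omega)]
      congr 1
      exact Fin.ext (by simp; omega)
  · rw [dif_neg h1]
    by_cases h2 : k < i
    · rw [if_pos h2, dif_neg (by omega)]
    · rw [if_neg h2, dif_neg (by omega)]

theorem stmt1 (q n : ℕ) (hq : 2 ≤ q) (hn : 1 ≤ n)
    (x : Fin n → ZMod q) (i : ℕ) (hi1 : 1 ≤ i) (hin : i ≤ n) :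
    ∀ k : Fin (n - 1 + 1),
      ((k : ℕ) + 1 < i → psi (deleteAt x i) k = psi x ⟨(k : ℕ), by omega⟩) ∧
      ((k : ℕ) + 1 = i →
        psi (deleteAt x i) k = psi x ⟨(k : ℕ), by omega⟩ + psi x ⟨(k : ℕ) + 1, by omega⟩) ∧
      (i < (k : ℕ) + 1 → psi (deleteAt x i) k = psi x ⟨(k : ℕ) + 1, by omega⟩) := by
  intro k
  refine ⟨fun h => ?_, fun h => ?_, fun h => ?_⟩ <;>
    simp only [psi, xpad_del x i hi1 hin]
  · rw [if_pos (by omega), if_pos (by omega)]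
  · rw [if_pos (by omega), if_neg (by omega)]
    ring
  · rw [if_neg (by omega), if_neg (by omega)]
end

section
/- Let q, n ≥ 2 be integers, let N ≥ (n+1)q be an integer and let 0 ≤ a < N. Then the code C_ψ(q,n;N) = {x ∈ Σ_q^n : VT(ψ(x)) ≡ a (mod N)} can correct the deletion of one symbol; that is, for any two distinct codewords x, z ∈ C_ψ(q,n;N), no sequence in Σ_q^{n−1} can be obtained both from x by deleting one symbol and from z by deleting one symbol. -/
/-- The VT syndrome `VT(y) = Σ_{i=1}^m i·y_i` (symbols viewed as integers). -/
def VTsum {q m : ℕ} (y : Fin m → ZMod q) : ℕ := ∑ i : Fin m, ((i : ℕ) + 1) * (y i).val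

def gfun {q n : ℕ} (x : Fin n → ZMod q) (k : ℕ) : ZMod q := xpad x k - xpad x (k + 1)

lemma xpad_of_gt {q n : ℕ} (x : Fin n → ZMod q) {k : ℕ} (h : n < k) : xpad x k = 0 :=
  dif_neg (by omega)

lemma xpad_zero' {q n : ℕ} (x : Fin n → ZMod q) : xpad x 0 = 0 := dif_neg (by omega)

lemma xpad_fin {q n : ℕ} (x : Fin n → ZMod q) (t : Fin n) : xpad x ((t : ℕ) + 1) = x t := by
  have h : 1 ≤ (t : ℕ) + 1 ∧ (t : ℕ) + 1 ≤ n := ⟨by omega, by omega⟩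
  rw [xpad, dif_pos h]
  exact congrArg x (Fin.ext (by simp))

lemma VTsum_psi {q n : ℕ} (x : Fin n → ZMod q) :
    VTsum (psi x) = ∑ k ∈ Finset.range (n + 1), (k + 1) * (gfun x k).val := by
  rw [VTsum, ← Fin.sum_univ_eq_sum_range (fun k => (k + 1) * (gfun x k).val) (n + 1)]
  rfl

lemma xpad_deleteAt {q n : ℕ} (x : Fin n → ZMod q) (i : ℕ) (h1 : 1 ≤ i) (hin : i ≤ n) (m : ℕ) :
    xpad (deleteAt x i) m = if m < i then xpad x m else xpad x (m + 1) := by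
  unfold xpad deleteAt
  simp only [Fin.val_mk]
  split_ifs with h2 h3 h4 h5 h6 h7 <;> first
    | rfl
    | omega
    | (congr 1; exact Fin.ext (by simp; omega))

section grel
variable {q n : ℕ} (x : Fin n → ZMod q) (i : ℕ)

lemma gfun_del_lt (h1 : 1 ≤ i) (hin : i ≤ n) (k : ℕ) (hk : k + 2 ≤ i) :
    gfun (deleteAt x i) k = gfun x k := by
  rw [gfun, gfun, xpad_deleteAt x i h1 hin, xpad_deleteAt x i h1 hin,
    if_pos (by omega : k < i), if_pos (by omega : k + 1 < i)]

lemma gfun_del_mid (h1 : 1 ≤ i) (hin : i ≤ n) :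
    gfun (deleteAt x i) (i - 1) = gfun x (i - 1) + gfun x i := by
  rw [gfun, gfun, gfun, xpad_deleteAt x i h1 hin, xpad_deleteAt x i h1 hin,
    if_pos (by omega : i - 1 < i), if_neg (by omega : ¬ i - 1 + 1 < i)]
  have h2 : i - 1 + 1 = i := by omega
  rw [h2]
  ring

lemma gfun_del_ge (h1 : 1 ≤ i) (hin : i ≤ n) (k : ℕ) (hk : i ≤ k) :
    gfun (deleteAt x i) k = gfun x (k + 1) := by
  rw [gfun, gfun, xpad_deleteAt x i h1 hin, xpad_deleteAt x i h1 hin,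
    if_neg (by omega : ¬ k < i), if_neg (by omega : ¬ k + 1 < i)]

end grel

lemma sum_ident (f g : ℕ → ℕ) (i n : ℕ) (h1 : 1 ≤ i) (hin : i ≤ n)
    (hlt : ∀ k, k + 2 ≤ i → g k = f k) (hge : ∀ k, i ≤ k → g k = f (k + 1)) :
    ∑ k ∈ Finset.range (n + 1), (k + 1) * f k + i * g (i - 1)
      = ∑ k ∈ Finset.range n, (k + 1) * g k + i * (f (i - 1) + f i) + f i
        + ∑ k ∈ Finset.Ico i n, g k := by
  induction n, hin using Nat.le_induction with
  | base =>
    rw [Finset.Ico_self, Finset.sum_empty]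
    obtain ⟨i', rfl⟩ : ∃ i', i = i' + 1 := ⟨i - 1, by omega⟩
    rw [Finset.sum_range_succ, Finset.sum_range_succ, Finset.sum_range_succ]
    have hs : ∑ k ∈ Finset.range i', (k + 1) * g k = ∑ k ∈ Finset.range i', (k + 1) * f k := by
      refine Finset.sum_congr rfl fun k hk => ?_
      rw [hlt k (by simpa using Finset.mem_range.mp hk)]
    rw [hs]
    simp only [Nat.add_sub_cancel]
    ring
  | succ m hm ih =>
    rw [Finset.sum_range_succ (fun k => (k + 1) * f k) (m + 1),
      Finset.sum_range_succ (fun k => (k + 1) * g k) m,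
      Finset.sum_Ico_succ_top (by omega : i ≤ m) g, hge m (by omega)]
    linarith [ih]

lemma delta {q n : ℕ} [NeZero q] (x : Fin n → ZMod q) (i : ℕ) (h1 : 1 ≤ i) (hin : i ≤ n)
    (hn : 1 ≤ n) :
    ∃ c ≤ 1,
      (gfun x (i - 1)).val + (gfun x i).val = (gfun (deleteAt x i) (i - 1)).val + q * c ∧
      VTsum (psi x) = VTsum (psi (deleteAt x i))
      + ((gfun x i).val + q * i * c + ∑ k ∈ Finset.Ico i n, (gfun (deleteAt x i) k).val) := by
  set w := deleteAt x i with hwdef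
  have hq0 : 0 < q := NeZero.pos q
  set s := (gfun x (i - 1)).val + (gfun x i).val with hsdef
  have hcval : (gfun w (i - 1)).val = s % q := by
    rw [hwdef, gfun_del_mid x i h1 hin, ZMod.val_add]
  have hc : (gfun x (i - 1)).val + (gfun x i).val = (gfun w (i - 1)).val + q * (s / q) := by
    rw [hcval]
    have hmd := Nat.mod_add_div s q
    omega
  refine ⟨s / q, ?_, hc, ?_⟩
  · have hs : s < 2 * q := by
      have := ZMod.val_lt (gfun x (i - 1))
      have := ZMod.val_lt (gfun x i)
      omega
    exact Nat.lt_succ_iff.mp ((Nat.div_lt_iff_lt_mul hq0).mpr (by omega))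
  · have hsum := sum_ident (fun k => (gfun x k).val) (fun k => (gfun w k).val) i n h1 hin
      (fun k hk => congrArg ZMod.val (gfun_del_lt x i h1 hin k hk))
      (fun k hk => congrArg ZMod.val (gfun_del_ge x i h1 hin k hk))
    rw [VTsum_psi, VTsum_psi]
    have hrange : n - 1 + 1 = n := by omega
    rw [hrange]
    rw [hc] at hsum
    have hexp : i * ((gfun w (i - 1)).val + q * (s / q)) + (gfun x i).val
        = i * (gfun w (i - 1)).val + (q * i * (s / q) + (gfun x i).val) := by ring
    linarith [hsum, hexp]

lemma recov {q n : ℕ} (x z : Fin n → ZMod q) (hg : ∀ k, gfun x k = gfun z k) : x = z := by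
  have key : ∀ m k, n + 1 ≤ k + m → xpad x k = xpad z k := by
    intro m
    induction m with
    | zero => intro k hk; rw [xpad_of_gt x (by omega), xpad_of_gt z (by omega)]
    | succ m ih =>
      intro k hk
      by_cases hk2 : n + 1 ≤ k + m
      · exact ih k hk2
      · have h2 : xpad x (k + 1) = xpad z (k + 1) := ih (k + 1) (by omega)
        have h3 := hg k
        rw [gfun, gfun, h2] at h3
        exact sub_left_injective h3
  funext t
  rw [← xpad_fin x t, ← xpad_fin z t]
  exact key (n + 1) ((t : ℕ) + 1) (by omega)

lemma main_le {q n N a : ℕ} [NeZero q] (hq : 2 ≤ q) (hn : 2 ≤ n)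
    (hN : (n + 1) * q ≤ N)
    (x z : Fin n → ZMod q)
    (hx : VTsum (psi x) % N = a) (hz : VTsum (psi z) % N = a)
    (i j : ℕ) (hi1 : 1 ≤ i) (hin : i ≤ n) (hj1 : 1 ≤ j) (hjn : j ≤ n) (hij : i ≤ j)
    (hw : deleteAt x i = deleteAt z j) : x = z := by
  obtain ⟨cx, hcx1, hcarx, hDx⟩ := delta x i hi1 hin (by omega)
  obtain ⟨cz, hcz1, hcarz, hDz⟩ := delta z j hj1 hjn (by omega)
  rw [← hw] at hDz hcarz
  set w := deleteAt x i with hwdef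
  set A := (gfun x i).val with hAdef
  set B := (gfun z j).val with hBdef
  have hq0 : 0 < q := by omega
  have hA : A < q := ZMod.val_lt _
  have hB : B < q := ZMod.val_lt _
  -- bound on the deltas
  have hbound : ∀ A' i' c', A' < q → 1 ≤ i' → i' ≤ n → c' ≤ 1 →
      A' + q * i' * c' + ∑ k ∈ Finset.Ico i' n, (gfun w k).val < N := by
    intro A' i' c' hA' h1 h2 h3
    have hS : ∑ k ∈ Finset.Ico i' n, (gfun w k).val ≤ (n - i') * (q - 1) := by
      have := Finset.sum_le_card_nsmul (Finset.Ico i' n) (fun k => (gfun w k).val) (q - 1)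
        (fun k _ => by show (gfun w k).val ≤ q - 1; have := ZMod.val_lt (gfun w k); omega)
      simpa [Nat.card_Ico, smul_eq_mul] using this
    have hS2 : (n - i') * (q - 1) + (n - i') = (n - i') * q := by
      rw [← Nat.mul_succ]
      congr 1
      omega
    have hc' : q * i' * c' ≤ q * i' := by
      calc q * i' * c' ≤ q * i' * 1 := Nat.mul_le_mul_left _ h3
      _ = q * i' := Nat.mul_one _
    have hlink : q * i' + (n - i') * q + q = (n + 1) * q := by
      have h4 : i' + (n - i') + 1 = n + 1 := by omega
      calc q * i' + (n - i') * q + q = (i' + (n - i') + 1) * q := by ring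
      _ = (n + 1) * q := by rw [h4]
    omega
  have hDxN := hbound A i cx hA hi1 hin hcx1
  have hDzN := hbound B j cz hB hj1 hjn hcz1
  -- equality of deltas
  have hTeq : VTsum (psi w) + (A + q * i * cx + ∑ k ∈ Finset.Ico i n, (gfun w k).val)
      ≡ VTsum (psi w) + (B + q * j * cz + ∑ k ∈ Finset.Ico j n, (gfun w k).val) [MOD N] := by
    rw [← hDx, ← hDz]
    unfold Nat.ModEq
    rw [hx, hz]
  have hDeq : A + q * i * cx + ∑ k ∈ Finset.Ico i n, (gfun w k).val
      = B + q * j * cz + ∑ k ∈ Finset.Ico j n, (gfun w k).val := by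
    have h2 := Nat.ModEq.add_left_cancel' (VTsum (psi w)) hTeq
    unfold Nat.ModEq at h2
    rwa [Nat.mod_eq_of_lt hDxN, Nat.mod_eq_of_lt hDzN] at h2
  have hsplit := Finset.sum_Ico_consecutive (fun k => (gfun w k).val) hij hjn
  have E : A + q * i * cx + ∑ k ∈ Finset.Ico i j, (gfun w k).val = B + q * j * cz := by
    have h' : (A + q * i * cx + ∑ k ∈ Finset.Ico i j, (gfun w k).val)
        + ∑ k ∈ Finset.Ico j n, (gfun w k).val
        = (B + q * j * cz) + ∑ k ∈ Finset.Ico j n, (gfun w k).val := by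
      linarith [hDeq, hsplit]
    exact Nat.add_right_cancel h'
  -- helper g-relations
  have Gx1 : ∀ m, m + 2 ≤ i → gfun w m = gfun x m := fun m hm => by
    rw [hwdef]; exact gfun_del_lt x i hi1 hin m hm
  have Gx2 : gfun w (i - 1) = gfun x (i - 1) + gfun x i := by
    rw [hwdef]; exact gfun_del_mid x i hi1 hin
  have Gx3 : ∀ m, i ≤ m → gfun w m = gfun x (m + 1) := fun m hm => by
    rw [hwdef]; exact gfun_del_ge x i hi1 hin m hm
  have Gz1 : ∀ m, m + 2 ≤ j → gfun w m = gfun z m := fun m hm => by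
    rw [hw]; exact gfun_del_lt z j hj1 hjn m hm
  have Gz2 : gfun w (j - 1) = gfun z (j - 1) + gfun z j := by
    rw [hw]; exact gfun_del_mid z j hj1 hjn
  have Gz3 : ∀ m, j ≤ m → gfun w m = gfun z (m + 1) := fun m hm => by
    rw [hw]; exact gfun_del_ge z j hj1 hjn m hm
  have hqle : q ≤ q * i := Nat.le_mul_of_pos_right q (by omega)
  rcases eq_or_lt_of_le hij with rfl | hlt
  · -- case i = j
    rw [Finset.Ico_self, Finset.sum_empty] at E
    have hABeq : A = B := by
      have hgen : ∀ P : ℕ, q ≤ P → A + P * cx = B + P * cz → A = B := by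
        intro P hP hE
        interval_cases cx <;> interval_cases cz <;> omega
      exact hgen (q * i) hqle (by linarith [E])
    have hgxz : gfun x i = gfun z i := ZMod.val_injective q hABeq
    refine recov x z fun k => ?_
    rcases (by omega : k + 2 ≤ i ∨ k = i - 1 ∨ k = i ∨ i + 1 ≤ k) with h | h | h | h
    · rw [← Gx1 k h, Gz1 k h]
    · subst h
      have h2 : gfun x (i - 1) + gfun x i = gfun z (i - 1) + gfun z i := by
        rw [← Gx2, Gz2]
      rw [hgxz] at h2
      exact add_right_cancel h2
    · subst h; exact hgxz
    · obtain ⟨m, rfl⟩ : ∃ m, k = m + 1 := ⟨k - 1, by omega⟩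
      rw [← Gx3 m (by omega), Gz3 m (by omega)]
  · -- case i < j
    obtain ⟨s, rfl⟩ : ∃ s, j = i + 1 + s := ⟨j - i - 1, by omega⟩
    have hj' : i + 1 + s - 1 = i + s := by omega
    have hsplit2 : ∑ k ∈ Finset.Ico i (i + 1 + s), (gfun w k).val
        = ∑ k ∈ Finset.Ico i (i + s), (gfun w k).val + (gfun w (i + s)).val := by
      have h3 : i + 1 + s = (i + s) + 1 := by omega
      rw [h3]
      exact Finset.sum_Ico_succ_top (by omega) _
    rw [hsplit2] at E
    rw [hj'] at Gz2 hcarz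
    have hdz' : (gfun z (i + s)).val < q := ZMod.val_lt _
    have hS' : (∑ k ∈ Finset.Ico i (i + s), (gfun w k).val) + s ≤ q * s := by
      have h4 : ∑ k ∈ Finset.Ico i (i + s), (gfun w k).val ≤ s * (q - 1) := by
        have := Finset.sum_le_card_nsmul (Finset.Ico i (i + s)) (fun k => (gfun w k).val) (q - 1)
          (fun k _ => by
            show (gfun w k).val ≤ q - 1
            have := ZMod.val_lt (gfun w k); omega)
        simpa [Nat.card_Ico, smul_eq_mul] using this
      have h5 : s * (q - 1) + s = s * q := by
        rw [← Nat.mul_succ]; congr 1; omega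
      have h6 : s * q = q * s := Nat.mul_comm _ _
      omega
    have hqj : q * (i + 1 + s) = q * i + q + q * s := by ring
    rw [hqj] at E
    have hfacts : A = 0 ∧ (∑ k ∈ Finset.Ico i (i + s), (gfun w k).val) = 0 ∧
        (gfun z (i + s)).val = 0 ∧ (gfun w (i + s)).val = B := by
      have hgen : ∀ P1 P2 S' e' dz' : ℕ, q ≤ P1 → S' + s ≤ P2 → e' < q → dz' < q →
          A + P1 * cx + (S' + e') = B + (P1 + q + P2) * cz →
          dz' + B = e' + q * cz →
          A = 0 ∧ S' = 0 ∧ dz' = 0 ∧ e' = B := by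
        intro P1 P2 S' e' dz' h1 h2 h3 h4 hE hC
        interval_cases cx <;> interval_cases cz <;> omega
      exact hgen (q * i) (q * s) _ _ _ hqle hS' (ZMod.val_lt _) hdz' (by linarith [E]) hcarz
    obtain ⟨hA0, hS0, hdz0, heB⟩ := hfacts
    have hgxi : gfun x i = 0 := (ZMod.val_eq_zero _).mp hA0
    have hgzj' : gfun z (i + s) = 0 := (ZMod.val_eq_zero _).mp hdz0
    have hwB : gfun w (i + s) = gfun z (i + 1 + s) := ZMod.val_injective q heB
    have hE0 : ∀ m, i ≤ m → m < i + s → gfun w m = 0 := by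
      intro m h1 h2
      have h3 := (Finset.sum_eq_zero_iff.mp hS0) m (Finset.mem_Ico.mpr ⟨h1, h2⟩)
      exact (ZMod.val_eq_zero _).mp h3
    refine recov x z fun k => ?_
    rcases (by omega : k + 2 ≤ i ∨ k = i - 1 ∨ k = i ∨ (i + 1 ≤ k ∧ k ≤ i + s) ∨
        k = i + 1 + s ∨ i + 1 + s + 1 ≤ k) with h | h | h | h | h | h
    · rw [← Gx1 k h, Gz1 k (by omega)]
    · subst h
      have h2 : gfun x (i - 1) = gfun w (i - 1) := by
        rw [Gx2, hgxi, add_zero]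
      rw [h2, Gz1 (i - 1) (by omega)]
    · rw [h, hgxi]
      rcases (by omega : i + 2 ≤ i + 1 + s ∨ s = 0) with h2 | h2
      · rw [← Gz1 i h2]
        exact (hE0 i (le_refl i) (by omega)).symm
      · subst h2
        rw [show i = i + 0 from rfl] at hgzj' ⊢
        exact hgzj'.symm
    · obtain ⟨h1, h2⟩ := h
      obtain ⟨m, rfl⟩ : ∃ m, k = m + 1 := ⟨k - 1, by omega⟩
      rw [← Gx3 m (by omega), hE0 m (by omega) (by omega)]
      rcases (by omega : m + 1 + 2 ≤ i + 1 + s ∨ m + 1 = i + s) with h3 | h3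
      · rw [← Gz1 (m + 1) h3]
        exact (hE0 (m + 1) (by omega) (by omega)).symm
      · rw [h3, hgzj']
    · subst h
      rw [show i + 1 + s = (i + s) + 1 from by omega, ← Gx3 (i + s) (by omega),
        show (i + s) + 1 = i + 1 + s from by omega] at *
      exact hwB
    · obtain ⟨m, rfl⟩ : ∃ m, k = m + 1 := ⟨k - 1, by omega⟩
      rw [← Gx3 m (by omega), Gz3 m (by omega)]

/-- The code `C_ψ(q,n;N) = {x : VT(ψ(x)) ≡ a (mod N)}` corrects a single deletion. -/
theorem stmt2 (q n N a : ℕ) (hq : 2 ≤ q) (hn : 2 ≤ n)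
    (hN : (n + 1) * q ≤ N) (ha : a < N)
    (x z : Fin n → ZMod q)
    (hx : VTsum (psi x) % N = a) (hz : VTsum (psi z) % N = a) (hxz : x ≠ z)
    (i j : ℕ) (hi1 : 1 ≤ i) (hin : i ≤ n) (hj1 : 1 ≤ j) (hjn : j ≤ n) :
    deleteAt x i ≠ deleteAt z j := by
  
  haveI : NeZero q := ⟨by omega⟩
  intro hw
  rcases le_total i j with h | h
  · exact hxz (main_le hq hn hN x z hx hz i j hi1 hin hj1 hjn h hw)
  · exact hxz ((main_le hq hn hN z x hz hx j i hj1 hjn hi1 hin h hw.symm).symm)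
end

section
/- Let q, n ≥ 2 be integers, let s ≥ 1 be a real number and let 0 < ε < (q−1)/2. If ℓ is an integer with ℓ ≤ n and ℓ ≥ ((q−1)²/ε²)·ln(2n√s), then the number of strong-(ℓ,ε)-locally-balanced sequences in Σ_q^n is at least q^n·(1 − 1/(2s)). -/
/-- The L1-weight of the length-`len` substring of `y` starting at 0-based position `a`. -/
def wsub {q m : ℕ} (y : Fin m → ZMod q) (a len : ℕ) (h : a + len ≤ m) : ℕ :=
  ∑ i : Fin len, (y ⟨a + (i : ℕ), by omega⟩).val

/-- `y` is strong-(ℓ,ε)-locally-balanced: every substring of length `ℓ′ ≥ ℓ` has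
L1-weight in `[((q-1)/2 - ε)ℓ′, ((q-1)/2 + ε)ℓ′]`. -/
def StrongLB {q m : ℕ} (y : Fin m → ZMod q) (ℓ : ℕ) (ε : ℝ) : Prop :=
  ∀ a len : ℕ, ℓ ≤ len → ∀ h : a + len ≤ m,
    (((q : ℝ) - 1) / 2 - ε) * (len : ℝ) ≤ (wsub y a len h : ℝ) ∧
    (wsub y a len h : ℝ) ≤ (((q : ℝ) - 1) / 2 + ε) * (len : ℝ)


open Finset Real in
open scoped Classical in
private lemma sum_zmod (q : ℕ) [NeZero q] (f : ℕ → ℝ) :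
    ∑ x : ZMod q, f (x.val) = ∑ j ∈ range q, f j := by
  apply Finset.sum_nbij' (i := fun x : ZMod q => x.val) (j := fun j : ℕ => (j : ZMod q)) <;>
    intros <;> simp_all [ZMod.val_lt, ZMod.val_cast_of_lt, ZMod.natCast_val, ZMod.cast_id', Nat.mod_eq_of_lt]


open Finset Real in
open scoped Classical in
private lemma mgf_bound (q : ℕ) [NeZero q] (hq : 2 ≤ q) (t : ℝ) :
    ∑ x : ZMod q, Real.exp (t * ((x.val : ℝ) - ((q:ℝ)-1)/2)) ≤
      (q : ℝ) * Real.exp (t^2 * ((q:ℝ)-1)^2 / 8) := by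
  set μ : ℝ := ((q:ℝ)-1)/2 with hμ
  rw [sum_zmod q (fun j => Real.exp (t * ((j:ℝ) - μ)))]
  have hcast : ∀ j ∈ range q, ((q - 1 - j : ℕ) : ℝ) = (q:ℝ) - 1 - (j:ℝ) := by
    intro j hj; rw [mem_range] at hj
    rw [Nat.cast_sub (by omega), Nat.cast_sub (by omega)]; push_cast; ring
  have hrev : ∑ j ∈ range q, Real.exp (t * ((j:ℝ) - μ))
      = ∑ j ∈ range q, Real.exp (-(t * ((j:ℝ) - μ))) := by
    apply Finset.sum_nbij' (i := fun j => q - 1 - j) (j := fun j => q - 1 - j) <;>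
      intro j hj <;> rw [mem_range] at * <;> try omega
    rw [hcast j (by rw [mem_range]; omega)]; rw [hμ]; ring_nf
  have hcosh : ∑ j ∈ range q, Real.exp (t * ((j:ℝ) - μ))
      = ∑ j ∈ range q, Real.cosh (t * ((j:ℝ) - μ)) := by
    have h2 : (2:ℝ) * ∑ j ∈ range q, Real.exp (t * ((j:ℝ) - μ))
        = (2:ℝ) * ∑ j ∈ range q, Real.cosh (t * ((j:ℝ) - μ)) := by
      rw [two_mul]
      nth_rewrite 2 [hrev]
      rw [← Finset.sum_add_distrib, Finset.mul_sum]
      refine Finset.sum_congr rfl fun j _ => ?_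
      rw [Real.cosh_eq]; ring
    linarith
  rw [hcosh]
  calc ∑ j ∈ range q, Real.cosh (t * ((j:ℝ) - μ))
      ≤ ∑ _j ∈ range q, Real.exp (t^2 * ((q:ℝ)-1)^2 / 8) := by
        refine Finset.sum_le_sum fun j hj => ?_
        refine (Real.cosh_le_exp_half_sq _).trans (Real.exp_le_exp.2 ?_)
        rw [mem_range] at hj
        have h1 : |(j:ℝ) - μ| ≤ ((q:ℝ)-1)/2 := by
          rw [abs_le, hμ]
          have : (j:ℝ) ≤ (q:ℝ) - 1 := by
            have : (j:ℝ) + 1 ≤ (q:ℝ) := by exact_mod_cast hj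
            linarith
          have : (0:ℝ) ≤ (j:ℝ) := Nat.cast_nonneg j
          constructor <;> linarith
        have h2 : ((j:ℝ) - μ)^2 ≤ (((q:ℝ)-1)/2)^2 := by
          rw [← sq_abs]
          exact pow_le_pow_left₀ (abs_nonneg _) h1 2
        have : (t * ((j:ℝ) - μ))^2 = t^2 * ((j:ℝ)-μ)^2 := by ring
        rw [this]
        have ht2 : t^2 * ((j:ℝ)-μ)^2 ≤ t^2 * (((q:ℝ)-1)/2)^2 :=
          mul_le_mul_of_nonneg_left h2 (sq_nonneg t)
        calc t^2*((j:ℝ)-μ)^2/2 ≤ t^2 * (((q:ℝ)-1)/2)^2 / 2 := by linarith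
          _ = t^2 * ((q:ℝ)-1)^2/8 := by ring
    _ = (q:ℝ) * Real.exp (t^2 * ((q:ℝ)-1)^2 / 8) := by
        rw [Finset.sum_const, card_range, nsmul_eq_mul]

open Finset Real in
open scoped Classical in
private lemma sum_exp_window (q n : ℕ) [NeZero q] (hq : 2 ≤ q) (a len : ℕ) (h : a + len ≤ n) (t : ℝ) :
    ∑ y : Fin n → ZMod q, Real.exp (t * ((wsub y a len h : ℝ) - ((q:ℝ)-1)/2 * len))
      ≤ (q:ℝ)^n * Real.exp ((len:ℝ) * (t^2 * ((q:ℝ)-1)^2 / 8)) := by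
  set μ : ℝ := ((q:ℝ)-1)/2 with hμ
  set E : ℝ := Real.exp (t^2 * ((q:ℝ)-1)^2 / 8) with hE
  -- the window as an embedding
  have hinj : Function.Injective (fun i : Fin len => (⟨a + i, by omega⟩ : Fin n)) := by
    intro i j hij
    simp only [Fin.mk.injEq] at hij
    exact Fin.ext (by omega)
  set e : Fin len ↪ Fin n := ⟨fun i => ⟨a + i, by omega⟩, hinj⟩ with he
  set S : Finset (Fin n) := Finset.univ.map e with hS
  have hcardS : S.card = len := by simp [hS]
  -- rewrite each summand as a product over all of Fin n
  have hsummand : ∀ y : Fin n → ZMod q,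
      Real.exp (t * ((wsub y a len h : ℝ) - μ * len))
        = ∏ j : Fin n, (if j ∈ S then Real.exp (t * (((y j).val : ℝ) - μ)) else 1) := by
    intro y
    have h1 : t * ((wsub y a len h : ℝ) - μ * len)
        = ∑ i : Fin len, t * (((y (e i)).val : ℝ) - μ) := by
      rw [wsub]
      push_cast
      simp only [mul_sub, Finset.sum_sub_distrib, Finset.mul_sum, Finset.sum_const,
        Finset.card_univ, Fintype.card_fin, nsmul_eq_mul]
      rw [show t * (μ * (len:ℝ)) = (len:ℝ) * (t * μ) by ring]
      congr 1
    rw [h1, Real.exp_sum]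
    rw [← Finset.prod_map Finset.univ e (fun j => Real.exp (t * (((y j).val : ℝ) - μ)))]
    rw [← hS]
    rw [Finset.prod_ite_mem, Finset.univ_inter]
  calc ∑ y : Fin n → ZMod q, Real.exp (t * ((wsub y a len h : ℝ) - μ * len))
      = ∑ y ∈ Fintype.piFinset (fun _ : Fin n => (Finset.univ : Finset (ZMod q))),
          ∏ j : Fin n, (if j ∈ S then Real.exp (t * (((y j).val : ℝ) - μ)) else 1) := by
        rw [Fintype.piFinset_univ]
        exact Finset.sum_congr rfl fun y _ => hsummand y
    _ = ∏ j : Fin n, ∑ x : ZMod q, (if j ∈ S then Real.exp (t * ((x.val : ℝ) - μ)) else 1) := by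
        rw [Finset.prod_univ_sum]
    _ ≤ ∏ j : Fin n, (if j ∈ S then (q:ℝ) * E else (q:ℝ)) := by
        refine Finset.prod_le_prod (fun j _ => Finset.sum_nonneg fun x _ => ?_)
          (fun j _ => ?_)
        · split <;> positivity
        · by_cases hj : j ∈ S
          · simp only [hj, if_true]
            exact mgf_bound q hq t
          · simp only [hj, if_false, Finset.sum_const, Finset.card_univ, ZMod.card,
              nsmul_eq_mul, mul_one, le_refl]
    _ = ((q:ℝ) * E) ^ len * (q:ℝ) ^ (n - len) := by
        rw [Finset.prod_ite, Finset.prod_const, Finset.prod_const]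
        congr 2
        · rw [show Finset.univ.filter (· ∈ S) = S by ext j; simp, hcardS]
        · rw [show Finset.univ.filter (fun j => ¬ j ∈ S) = Sᶜ by ext j; simp,
            Finset.card_compl, hcardS, Fintype.card_fin]
    _ = (q:ℝ)^n * Real.exp ((len:ℝ) * (t^2 * ((q:ℝ)-1)^2 / 8)) := by
        rw [mul_pow, Real.exp_nat_mul, hE]
        rw [show (q:ℝ)^len * Real.exp (t^2*((q:ℝ)-1)^2/8)^len * (q:ℝ)^(n-len)
            = ((q:ℝ)^len * (q:ℝ)^(n-len)) * Real.exp (t^2*((q:ℝ)-1)^2/8)^len by ring,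
          ← pow_add, show len + (n - len) = n by omega]

open Finset Real in
open scoped Classical in
private lemma tail_generic (q n : ℕ) [NeZero q] (hq : 2 ≤ q) (a len : ℕ) (h : a + len ≤ n)
    (ε t : ℝ) (P : (Fin n → ZMod q) → Prop)
    (hP : ∀ y, P y → 4*ε^2*(len:ℝ)/((q:ℝ)-1)^2 ≤ t * ((wsub y a len h : ℝ) - ((q:ℝ)-1)/2 * len))
    (ht : t^2 = 16*ε^2/((q:ℝ)-1)^4) :
    ((Finset.univ.filter P).card : ℝ) ≤ (q:ℝ)^n * Real.exp (-2*ε^2*(len:ℝ)/((q:ℝ)-1)^2) := by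
  have hq1 : (1:ℝ) ≤ (q:ℝ) - 1 := by
    have : (2:ℝ) ≤ (q:ℝ) := by exact_mod_cast hq
    linarith
  have hqne : ((q:ℝ)-1) ≠ 0 := by linarith
  set c : ℝ := 4*ε^2*(len:ℝ)/((q:ℝ)-1)^2 with hc
  have key : ((Finset.univ.filter P).card : ℝ) * Real.exp c
      ≤ (q:ℝ)^n * Real.exp ((len:ℝ) * (t^2 * ((q:ℝ)-1)^2 / 8)) := by
    calc ((Finset.univ.filter P).card : ℝ) * Real.exp c
        = ∑ _y ∈ Finset.univ.filter P, Real.exp c := by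
          rw [Finset.sum_const, nsmul_eq_mul]
      _ ≤ ∑ y ∈ Finset.univ.filter P,
            Real.exp (t * ((wsub y a len h : ℝ) - ((q:ℝ)-1)/2 * len)) := by
          refine Finset.sum_le_sum fun y hy => Real.exp_le_exp.2 ?_
          exact hP y (Finset.mem_filter.1 hy).2
      _ ≤ ∑ y : Fin n → ZMod q,
            Real.exp (t * ((wsub y a len h : ℝ) - ((q:ℝ)-1)/2 * len)) :=
          Finset.sum_le_sum_of_subset_of_nonneg (Finset.filter_subset _ _)
            (fun y _ _ => (Real.exp_pos _).le)
      _ ≤ _ := sum_exp_window q n hq a len h t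
  have hexp : (len:ℝ) * (t^2 * ((q:ℝ)-1)^2 / 8) - c = -2*ε^2*(len:ℝ)/((q:ℝ)-1)^2 := by
    rw [ht, hc]; field_simp; ring
  calc ((Finset.univ.filter P).card : ℝ)
        = ((Finset.univ.filter P).card : ℝ) * Real.exp c / Real.exp c := by
          field_simp
      _ ≤ (q:ℝ)^n * Real.exp ((len:ℝ) * (t^2 * ((q:ℝ)-1)^2 / 8)) / Real.exp c := by
          gcongr
      _ = (q:ℝ)^n * Real.exp (-2*ε^2*(len:ℝ)/((q:ℝ)-1)^2) := by
          rw [mul_div_assoc, ← Real.exp_sub, hexp]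


open Finset Real in
open scoped Classical in
private lemma window_bad (q n : ℕ) [NeZero q] (hq : 2 ≤ q) (a len : ℕ) (h : a + len ≤ n)
    (ε : ℝ) (hε0 : 0 < ε) :
    ((Finset.univ.filter (fun y : Fin n → ZMod q =>
        (wsub y a len h : ℝ) < (((q:ℝ)-1)/2 - ε) * len ∨
        (((q:ℝ)-1)/2 + ε) * len < (wsub y a len h : ℝ))).card : ℝ)
      ≤ 2 * (q:ℝ)^n * Real.exp (-2*ε^2*(len:ℝ)/((q:ℝ)-1)^2) := by
  have hq1 : (1:ℝ) ≤ (q:ℝ) - 1 := by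
    have : (2:ℝ) ≤ (q:ℝ) := by exact_mod_cast hq
    linarith
  have hqne : ((q:ℝ)-1) ≠ 0 := by linarith
  have hlen0 : (0:ℝ) ≤ (len:ℝ) := Nat.cast_nonneg _
  rw [Finset.filter_or]
  have hlow := tail_generic q n hq a len h ε (-(4*ε/((q:ℝ)-1)^2))
      (fun y => (wsub y a len h : ℝ) < (((q:ℝ)-1)/2 - ε) * len)
      (by
        intro y hy
        have h1 : (wsub y a len h : ℝ) - ((q:ℝ)-1)/2 * len ≤ -(ε * len) := by nlinarith
        have ht0 : -(4*ε/((q:ℝ)-1)^2) ≤ 0 := neg_nonpos.2 (by positivity)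
        have h2 := mul_le_mul_of_nonpos_left h1 ht0
        calc 4*ε^2*(len:ℝ)/((q:ℝ)-1)^2
            = -(4*ε/((q:ℝ)-1)^2) * (-(ε * len)) := by field_simp
          _ ≤ _ := h2)
      (by field_simp; ring)
  have hup := tail_generic q n hq a len h ε (4*ε/((q:ℝ)-1)^2)
      (fun y => (((q:ℝ)-1)/2 + ε) * len < (wsub y a len h : ℝ))
      (by
        intro y hy
        have h1 : ε * len ≤ (wsub y a len h : ℝ) - ((q:ℝ)-1)/2 * len := by nlinarith
        have ht0 : (0:ℝ) ≤ 4*ε/((q:ℝ)-1)^2 := by positivity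
        have h2 := mul_le_mul_of_nonneg_left h1 ht0
        calc 4*ε^2*(len:ℝ)/((q:ℝ)-1)^2 = 4*ε/((q:ℝ)-1)^2 * (ε * len) := by
              field_simp
          _ ≤ _ := h2)
      (by field_simp; ring)
  calc ((Finset.univ.filter (fun y : Fin n → ZMod q =>
          (wsub y a len h : ℝ) < (((q:ℝ)-1)/2 - ε) * len) ∪
        Finset.univ.filter (fun y : Fin n → ZMod q =>
          (((q:ℝ)-1)/2 + ε) * len < (wsub y a len h : ℝ))).card : ℝ)
      ≤ ((Finset.univ.filter (fun y : Fin n → ZMod q =>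
          (wsub y a len h : ℝ) < (((q:ℝ)-1)/2 - ε) * len)).card : ℝ) +
        ((Finset.univ.filter (fun y : Fin n → ZMod q =>
          (((q:ℝ)-1)/2 + ε) * len < (wsub y a len h : ℝ))).card : ℝ) := by
        exact_mod_cast Finset.card_union_le _ _
    _ ≤ 2 * (q:ℝ)^n * Real.exp (-2*ε^2*(len:ℝ)/((q:ℝ)-1)^2) := by
        have := add_le_add hlow hup; linarith

theorem stmt3 (q n : ℕ) (hq : 2 ≤ q) (hn : 2 ≤ n) (s ε : ℝ) (hs : 1 ≤ s)
    (hε0 : 0 < ε) (hε : ε < ((q : ℝ) - 1) / 2)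
    (ℓ : ℕ) (hℓn : ℓ ≤ n)
    (hℓ : ((q : ℝ) - 1) ^ 2 / ε ^ 2 * Real.log (2 * (n : ℝ) * Real.sqrt s) ≤ (ℓ : ℝ)) :
    (q : ℝ) ^ n * (1 - 1 / (2 * s)) ≤
      (Nat.card {y : Fin n → ZMod q // StrongLB y ℓ ε} : ℝ) := by
  classical
  haveI : NeZero q := ⟨by omega⟩
  set μ : ℝ := ((q:ℝ)-1)/2 with hμ
  have hq1 : (1:ℝ) ≤ (q:ℝ) - 1 := by
    have : (2:ℝ) ≤ (q:ℝ) := by exact_mod_cast hq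
    linarith
  have hs0 : (0:ℝ) < s := by linarith
  have hsq1 : (1:ℝ) ≤ Real.sqrt s := by
    rw [show (1:ℝ) = Real.sqrt 1 by simp]
    exact Real.sqrt_le_sqrt hs
  have hn2 : (2:ℝ) ≤ (n:ℝ) := by exact_mod_cast hn
  have hA4 : (4:ℝ) ≤ 2 * (n:ℝ) * Real.sqrt s := by nlinarith
  have hA0 : (0:ℝ) < 2 * (n:ℝ) * Real.sqrt s := by linarith
  have hL0 : (0:ℝ) < Real.log (2 * (n:ℝ) * Real.sqrt s) := by
    apply Real.log_pos; linarith
  set L : ℝ := Real.log (2 * (n:ℝ) * Real.sqrt s) with hLdef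
  have hℓ1 : 1 ≤ ℓ := by
    by_contra hc
    have : ℓ = 0 := by omega
    rw [this] at hℓ
    simp only [Nat.cast_zero] at hℓ
    have h1 : (0:ℝ) < ((q:ℝ)-1)^2 / ε^2 := by positivity
    nlinarith
  -- per-window exponential ≤ 1/(4 n² s)
  have hexp_bound : ∀ len : ℕ, ℓ ≤ len →
      Real.exp (-2*ε^2*(len:ℝ)/((q:ℝ)-1)^2) ≤ 1 / (4 * (n:ℝ)^2 * s) := by
    intro len hlen
    have hlencast : (ℓ:ℝ) ≤ (len:ℝ) := by exact_mod_cast hlen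
    have h1 : 2 * L ≤ 2*ε^2*(len:ℝ)/((q:ℝ)-1)^2 := by
      have h2 : ((q:ℝ)-1)^2 / ε^2 * L ≤ (len:ℝ) := le_trans hℓ hlencast
      have h3 : 0 < ε^2 := by positivity
      have h4 : 0 < ((q:ℝ)-1)^2 := by positivity
      rw [le_div_iff₀ h4]
      calc 2 * L * ((q:ℝ)-1)^2 = 2 * ε^2 * (((q:ℝ)-1)^2/ε^2 * L) := by
            field_simp
        _ ≤ 2 * ε^2 * (len:ℝ) := by nlinarith
    calc Real.exp (-2*ε^2*(len:ℝ)/((q:ℝ)-1)^2) ≤ Real.exp (-(2*L)) := by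
          apply Real.exp_le_exp.2
          have : -2*ε^2*(len:ℝ)/((q:ℝ)-1)^2 = -(2*ε^2*(len:ℝ)/((q:ℝ)-1)^2) := by ring
          rw [this]; linarith
      _ = 1 / (4 * (n:ℝ)^2 * s) := by
          rw [show -(2*L) = -L + -L by ring, Real.exp_add, hLdef, Real.exp_neg,
            Real.exp_log hA0]
          rw [← mul_inv, show (2*(n:ℝ)*Real.sqrt s) * (2*(n:ℝ)*Real.sqrt s)
              = 4*(n:ℝ)^2*(Real.sqrt s * Real.sqrt s) by ring,
            Real.mul_self_sqrt hs0.le, one_div]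
  -- the bad predicate for a window
  set BadP : ℕ → ℕ → (Fin n → ZMod q) → Prop := fun a len y =>
    ∃ hh : a + len ≤ n, ℓ ≤ len ∧
      ((wsub y a len hh : ℝ) < (μ - ε) * len ∨ (μ + ε) * len < (wsub y a len hh : ℝ))
    with hBadP
  -- each window's bad count
  have hwin : ∀ a len : ℕ,
      ((Finset.univ.filter (BadP a len)).card : ℝ) ≤ (q:ℝ)^n / (2 * (n:ℝ)^2 * s) := by
    intro a len
    by_cases hc : a + len ≤ n ∧ ℓ ≤ len
    · obtain ⟨hc1, hc2⟩ := hc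
      have hsub : Finset.univ.filter (BadP a len) ⊆
          Finset.univ.filter (fun y : Fin n → ZMod q =>
            (wsub y a len hc1 : ℝ) < (((q:ℝ)-1)/2 - ε) * len ∨
            (((q:ℝ)-1)/2 + ε) * len < (wsub y a len hc1 : ℝ)) := by
        intro y hy
        rw [Finset.mem_filter] at hy ⊢
        obtain ⟨_, hh, _, hor⟩ := hy
        exact ⟨Finset.mem_univ y, hor⟩
      calc ((Finset.univ.filter (BadP a len)).card : ℝ)
          ≤ ((Finset.univ.filter (fun y : Fin n → ZMod q =>
              (wsub y a len hc1 : ℝ) < (((q:ℝ)-1)/2 - ε) * len ∨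
              (((q:ℝ)-1)/2 + ε) * len < (wsub y a len hc1 : ℝ))).card : ℝ) := by
            exact_mod_cast Finset.card_le_card hsub
        _ ≤ 2 * (q:ℝ)^n * Real.exp (-2*ε^2*(len:ℝ)/((q:ℝ)-1)^2) :=
            window_bad q n hq a len hc1 ε hε0
        _ ≤ 2 * (q:ℝ)^n * (1 / (4 * (n:ℝ)^2 * s)) := by
            have := hexp_bound len hc2
            have hq0 : (0:ℝ) < (q:ℝ)^n := by positivity
            nlinarith
        _ = (q:ℝ)^n / (2 * (n:ℝ)^2 * s) := by
            field_simp; ring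
    · have : Finset.univ.filter (BadP a len) = ∅ := by
        apply Finset.filter_false_of_mem
        intro y _
        rintro ⟨hh, hl, _⟩
        exact hc ⟨hh, hl⟩
      rw [this]
      simp only [Finset.card_empty, Nat.cast_zero]
      positivity
  -- union bound
  set Bd : Finset (Fin n → ZMod q) := Finset.univ.filter (fun y => ¬ StrongLB y ℓ ε)
    with hBd
  have hBdsub : Bd ⊆ (Finset.range n ×ˢ Finset.range n).biUnion
      (fun p => Finset.univ.filter (BadP p.1 (p.2 + 1))) := by
    intro y hy
    rw [hBd, Finset.mem_filter] at hy
    obtain ⟨-, hy⟩ := hy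
    rw [StrongLB] at hy
    push_neg at hy
    obtain ⟨a, len, hlen, hh, hor⟩ := hy
    have hor' : (wsub y a len hh : ℝ) < (μ - ε) * len ∨
        (μ + ε) * len < (wsub y a len hh : ℝ) := by
      by_cases hA : (((q:ℝ)-1)/2 - ε) * (len:ℝ) ≤ (wsub y a len hh : ℝ)
      · exact Or.inr (by rw [hμ]; exact hor hA)
      · exact Or.inl (by rw [hμ]; exact lt_of_not_ge hA)
    have hlen1 : 1 ≤ len := le_trans hℓ1 hlen
    have hlenn : len ≤ n := by omega
    rw [Finset.mem_biUnion]
    refine ⟨(a, len - 1), ?_, ?_⟩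
    · rw [Finset.mem_product, Finset.mem_range, Finset.mem_range]
      constructor <;> omega
    · rw [Finset.mem_filter]
      refine ⟨Finset.mem_univ y, ?_⟩
      have hlen' : len - 1 + 1 = len := by omega
      simp only [hlen']
      exact ⟨hh, hlen, hor'⟩
  -- total bad count
  have hBdcard : (Bd.card : ℝ) ≤ (q:ℝ)^n / (2 * s) := by
    have hn0 : ((n:ℝ)) ≠ 0 := by linarith
    calc (Bd.card : ℝ)
        ≤ (((Finset.range n ×ˢ Finset.range n).biUnion
            (fun p => Finset.univ.filter (BadP p.1 (p.2 + 1)))).card : ℝ) := by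
          exact_mod_cast Finset.card_le_card hBdsub
      _ ≤ ∑ p ∈ Finset.range n ×ˢ Finset.range n,
            ((Finset.univ.filter (BadP p.1 (p.2 + 1))).card : ℝ) := by
          exact_mod_cast Finset.card_biUnion_le
      _ ≤ ∑ _p ∈ Finset.range n ×ˢ Finset.range n, (q:ℝ)^n / (2 * (n:ℝ)^2 * s) :=
          Finset.sum_le_sum fun p _ => hwin p.1 (p.2 + 1)
      _ = ((n:ℝ) * (n:ℝ)) * ((q:ℝ)^n / (2 * (n:ℝ)^2 * s)) := by
          rw [Finset.sum_const, Finset.card_product, Finset.card_range, nsmul_eq_mul]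
          push_cast; ring
      _ = (q:ℝ)^n / (2 * s) := by field_simp
  -- conclude
  have hcard_univ : Fintype.card (Fin n → ZMod q) = q^n := by
    rw [Fintype.card_fun, ZMod.card, Fintype.card_fin]
  have hNat : (Nat.card {y : Fin n → ZMod q // StrongLB y ℓ ε} : ℝ)
      = ((Finset.univ.filter (fun y : Fin n → ZMod q => StrongLB y ℓ ε)).card : ℝ) := by
    rw [Nat.card_eq_fintype_card, Fintype.card_subtype]
  have hsplit : (Finset.univ.filter (fun y : Fin n → ZMod q => StrongLB y ℓ ε)).card
      + Bd.card = q^n := by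
    rw [hBd, Finset.card_filter_add_card_filter_not, Finset.card_univ, hcard_univ]
  have hsplit' : ((Finset.univ.filter
      (fun y : Fin n → ZMod q => StrongLB y ℓ ε)).card : ℝ) + (Bd.card : ℝ) = (q:ℝ)^n := by
    exact_mod_cast hsplit
  rw [hNat]
  have hqn0 : (0:ℝ) < (q:ℝ)^n := by positivity
  have : (q:ℝ)^n * (1 - 1/(2*s)) = (q:ℝ)^n - (q:ℝ)^n/(2*s) := by
    field_simp
  linarith
end

section
/- Let q, n ≥ 2 be integers and 0 < ε < (q−1)/2. If ℓ is an integer with ℓ ≤ n+1 and ℓ ≥ ((q−1)²/ε²)·ln(2(n+1)√q), then there are at least q^n/2 sequences x ∈ Σ_q^n such that ψ(x) is strong-(ℓ,ε)-locally-balanced. -/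
open Finset Real

namespace Stmt4Aux

lemma pair_bound (B : ℝ) (u : ℝ) (hu : u^2 ≤ B) :
    Real.exp u + Real.exp (-u) ≤ 2 * Real.exp (B/2) := by
  have h := Real.cosh_le_exp_half_sq u
  rw [Real.cosh_eq] at h
  have := Real.exp_le_exp.2 (by linarith : u^2/2 ≤ B/2)
  linarith

lemma mgf_scalar (q : ℕ) (hq : 2 ≤ q) [NeZero q] (t : ℝ) :
    ∑ v : ZMod q, Real.exp (t * v.val) ≤
      (q : ℝ) * Real.exp (t * (((q:ℝ)-1)/2) + t^2*((q:ℝ)-1)^2/8) := by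
  have hsum : ∑ v : ZMod q, Real.exp (t * v.val)
      = ∑ k ∈ Finset.range q, Real.exp (t * k) := by
    rw [← Fin.sum_univ_eq_sum_range]
    apply Fintype.sum_bijective (fun v : ZMod q => (⟨v.val, ZMod.val_lt v⟩ : Fin q))
    · constructor
      · intro a b hab
        exact ZMod.val_injective q (by simpa using congrArg Fin.val hab)
      · intro k
        exact ⟨(k : ZMod q), by ext; simp [ZMod.val_natCast_of_lt k.isLt]⟩
    · intro v; rfl
  rw [hsum]
  set μ : ℝ := ((q:ℝ)-1)/2 with hμ
  set B : ℝ := t^2*((q:ℝ)-1)^2/4 with hB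
  have key : ∀ k, k < q → (k:ℝ) ≤ (q:ℝ) - 1 := by
    intro k hk
    have : (k:ℝ) + 1 ≤ q := by exact_mod_cast Nat.succ_le_of_lt hk
    linarith
  have h2 : 2 * ∑ k ∈ range q, Real.exp (t * k - t * μ)
      ≤ 2 * ((q:ℝ) * Real.exp (B/2)) := by
    have hrefl := Finset.sum_range_reflect (fun k => Real.exp (t * k - t * μ)) q
    calc 2 * ∑ k ∈ range q, Real.exp (t * k - t * μ)
        = ∑ k ∈ range q, (Real.exp (t * k - t * μ)
            + Real.exp (t * ((q - 1 - k : ℕ):ℝ) - t * μ)) := by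
          rw [Finset.sum_add_distrib, ← hrefl]; ring
      _ ≤ ∑ k ∈ range q, 2 * Real.exp (B/2) := by
          apply Finset.sum_le_sum
          intro k hk
          rw [Finset.mem_range] at hk
          have hk1 : (k:ℝ) ≤ (q:ℝ) - 1 := key k hk
          have hcast : ((q - 1 - k : ℕ):ℝ) = (q:ℝ) - 1 - k := by
            have h1 : k ≤ q - 1 := by omega
            have h2 : 1 ≤ q := by omega
            push_cast [Nat.cast_sub h1, Nat.cast_sub h2]
            ring
          rw [hcast]
          have hneg : t * ((q:ℝ) - 1 - k) - t * μ = -(t * k - t * μ) := by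
            rw [hμ]; ring
          rw [hneg]
          apply pair_bound B
          have hk0 : (0:ℝ) ≤ (k:ℝ) := Nat.cast_nonneg k
          rw [hB, hμ]
          nlinarith [mul_nonneg (mul_nonneg (sq_nonneg t) hk0) (by linarith : (0:ℝ) ≤ (q:ℝ)-1-(k:ℝ))]
      _ = (q:ℝ) * (2 * Real.exp (B/2)) := by
          rw [Finset.sum_const, Finset.card_range]; push_cast; ring
      _ = 2 * ((q:ℝ) * Real.exp (B/2)) := by ring
  have hfin : ∑ k ∈ range q, Real.exp (t * k)
      = Real.exp (t * μ) * ∑ k ∈ range q, Real.exp (t * k - t * μ) := by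
    rw [Finset.mul_sum]
    apply Finset.sum_congr rfl
    intro k _
    rw [← Real.exp_add]; ring_nf
  rw [hfin, Real.exp_add]
  have hE : (0:ℝ) < Real.exp (t * μ) := Real.exp_pos _
  have hBB : t^2*((q:ℝ)-1)^2/8 = B/2 := by rw [hB]; ring
  rw [hBB]
  nlinarith [h2, hE]

lemma sum_exp_prod (q len : ℕ) [NeZero q] (t : ℝ) :
    ∑ z : Fin len → ZMod q, Real.exp (t * ∑ i, ((z i).val : ℝ))
      = (∑ v : ZMod q, Real.exp (t * v.val)) ^ len := by
  classical
  rw [Fintype.sum_pow]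
  apply Finset.sum_congr rfl
  intro z _
  rw [Finset.mul_sum, Real.exp_sum]

lemma chernoff_core (q len : ℕ) (hq : 2 ≤ q) [NeZero q] (t : ℝ)
    (P : (Fin len → ZMod q) → Prop) [DecidablePred P] (c : ℝ)
    (hP : ∀ z, P z → c ≤ t * (∑ i, ((z i).val : ℝ))) :
    ((univ.filter P).card : ℝ) ≤
      Real.exp (-c) * ((q:ℝ) * Real.exp (t*(((q:ℝ)-1)/2) + t^2*((q:ℝ)-1)^2/8))^len := by
  have key : ((univ.filter P).card : ℝ) * Real.exp c
      ≤ ((q:ℝ) * Real.exp (t*(((q:ℝ)-1)/2) + t^2*((q:ℝ)-1)^2/8))^len := by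
    calc ((univ.filter P).card : ℝ) * Real.exp c
        = ∑ _z ∈ univ.filter P, Real.exp c := by rw [Finset.sum_const, nsmul_eq_mul]
      _ ≤ ∑ z ∈ univ.filter P, Real.exp (t * ∑ i, ((z i).val : ℝ)) := by
          apply Finset.sum_le_sum
          intro z hz
          exact Real.exp_le_exp.2 (hP z (Finset.mem_filter.1 hz).2)
      _ ≤ ∑ z : Fin len → ZMod q, Real.exp (t * ∑ i, ((z i).val : ℝ)) := by
          apply Finset.sum_le_sum_of_subset_of_nonneg (Finset.filter_subset _ _)
          intro z _ _; positivity
      _ = (∑ v : ZMod q, Real.exp (t * v.val)) ^ len := sum_exp_prod q len t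
      _ ≤ ((q:ℝ) * Real.exp (t*(((q:ℝ)-1)/2) + t^2*((q:ℝ)-1)^2/8))^len := by
          apply pow_le_pow_left₀ (by positivity)
          exact mgf_scalar q hq t
  rw [Real.exp_neg, inv_mul_eq_div, le_div_iff₀ (Real.exp_pos c)]
  exact key

lemma tail_generic (q len : ℕ) (hq : 2 ≤ q) [NeZero q] (t : ℝ)
    (P : (Fin len → ZMod q) → Prop) [DecidablePred P] (c : ℝ)
    (hP : ∀ z, P z → c ≤ t * (∑ i, ((z i).val : ℝ))) :
    ((univ.filter P).card : ℝ) ≤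
      (q:ℝ)^len * Real.exp ((len:ℝ)*(t*(((q:ℝ)-1)/2) + t^2*((q:ℝ)-1)^2/8) - c) := by
  refine (chernoff_core q len hq t P c hP).trans (le_of_eq ?_)
  rw [mul_pow, ← Real.exp_nat_mul, mul_left_comm, ← Real.exp_add, neg_add_eq_sub]

lemma tail_up (q len : ℕ) (hq : 2 ≤ q) [NeZero q] (ε : ℝ) (hε0 : 0 < ε)
    [DecidablePred (fun z : Fin len → ZMod q =>
        (((q:ℝ)-1)/2 + ε) * len < ∑ i, ((z i).val : ℝ))] :
    ((univ.filter (fun z : Fin len → ZMod q =>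
        (((q:ℝ)-1)/2 + ε) * len < ∑ i, ((z i).val : ℝ))).card : ℝ)
      ≤ (q:ℝ)^len * Real.exp (-(2*ε^2/((q:ℝ)-1)^2) * len) := by
  have hq1 : (1:ℝ) ≤ (q:ℝ) - 1 := by
    have : (2:ℝ) ≤ q := by exact_mod_cast hq
    linarith
  have hq0 : ((q:ℝ)-1) ≠ 0 := by linarith
  have ht0 : 0 < 4*ε/((q:ℝ)-1)^2 := by positivity
  have hP : ∀ z : Fin len → ZMod q,
      ((((q:ℝ)-1)/2 + ε) * len < ∑ i, ((z i).val : ℝ)) →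
      (4*ε/((q:ℝ)-1)^2) * ((((q:ℝ)-1)/2 + ε) * len)
        ≤ (4*ε/((q:ℝ)-1)^2) * (∑ i, ((z i).val : ℝ)) :=
    fun z hz => mul_le_mul_of_nonneg_left hz.le ht0.le
  refine (tail_generic q len hq _ _ _ hP).trans (le_of_eq ?_)
  congr 2
  field_simp
  ring

lemma tail_low (q len : ℕ) (hq : 2 ≤ q) [NeZero q] (ε : ℝ) (hε0 : 0 < ε)
    [DecidablePred (fun z : Fin len → ZMod q =>
        (∑ i, ((z i).val : ℝ)) < (((q:ℝ)-1)/2 - ε) * len)] :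
    ((univ.filter (fun z : Fin len → ZMod q =>
        (∑ i, ((z i).val : ℝ)) < (((q:ℝ)-1)/2 - ε) * len)).card : ℝ)
      ≤ (q:ℝ)^len * Real.exp (-(2*ε^2/((q:ℝ)-1)^2) * len) := by
  have hq1 : (1:ℝ) ≤ (q:ℝ) - 1 := by
    have : (2:ℝ) ≤ q := by exact_mod_cast hq
    linarith
  have hq0 : ((q:ℝ)-1) ≠ 0 := by linarith
  have ht0 : 0 < 4*ε/((q:ℝ)-1)^2 := by positivity
  have hP : ∀ z : Fin len → ZMod q,
      ((∑ i, ((z i).val : ℝ)) < (((q:ℝ)-1)/2 - ε) * len) →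
      (-(4*ε/((q:ℝ)-1)^2)) * ((((q:ℝ)-1)/2 - ε) * len)
        ≤ (-(4*ε/((q:ℝ)-1)^2)) * (∑ i, ((z i).val : ℝ)) :=
    fun z hz => mul_le_mul_of_nonpos_left hz.le (by linarith)
  refine (tail_generic q len hq _ _ _ hP).trans (le_of_eq ?_)
  congr 2
  field_simp
  ring

lemma tail_both (q len : ℕ) (hq : 2 ≤ q) [NeZero q] (ε : ℝ) (hε0 : 0 < ε)
    [DecidablePred (fun z : Fin len → ZMod q =>
        (∑ i, ((z i).val : ℝ)) < (((q:ℝ)-1)/2 - ε) * len ∨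
        (((q:ℝ)-1)/2 + ε) * len < ∑ i, ((z i).val : ℝ))] :
    ((univ.filter (fun z : Fin len → ZMod q =>
        (∑ i, ((z i).val : ℝ)) < (((q:ℝ)-1)/2 - ε) * len ∨
        (((q:ℝ)-1)/2 + ε) * len < ∑ i, ((z i).val : ℝ))).card : ℝ)
      ≤ 2 * ((q:ℝ)^len * Real.exp (-(2*ε^2/((q:ℝ)-1)^2) * len)) := by
  classical
  have hsub : (univ.filter (fun z : Fin len → ZMod q =>
        (∑ i, ((z i).val : ℝ)) < (((q:ℝ)-1)/2 - ε) * len ∨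
        (((q:ℝ)-1)/2 + ε) * len < ∑ i, ((z i).val : ℝ)))
      ⊆ (univ.filter (fun z : Fin len → ZMod q =>
        (∑ i, ((z i).val : ℝ)) < (((q:ℝ)-1)/2 - ε) * len))
        ∪ (univ.filter (fun z : Fin len → ZMod q =>
        (((q:ℝ)-1)/2 + ε) * len < ∑ i, ((z i).val : ℝ))) := by
    intro z hz
    rw [Finset.mem_filter] at hz
    rcases hz.2 with h | h
    · exact Finset.mem_union_left _ (Finset.mem_filter.2 ⟨hz.1, h⟩)
    · exact Finset.mem_union_right _ (Finset.mem_filter.2 ⟨hz.1, h⟩)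
  have hcard := (Finset.card_le_card hsub).trans (Finset.card_union_le _ _)
  have hcast : ((univ.filter (fun z : Fin len → ZMod q =>
        (∑ i, ((z i).val : ℝ)) < (((q:ℝ)-1)/2 - ε) * len ∨
        (((q:ℝ)-1)/2 + ε) * len < ∑ i, ((z i).val : ℝ))).card : ℝ)
      ≤ ((univ.filter (fun z : Fin len → ZMod q =>
        (∑ i, ((z i).val : ℝ)) < (((q:ℝ)-1)/2 - ε) * len)).card : ℝ)
      + ((univ.filter (fun z : Fin len → ZMod q =>
        (((q:ℝ)-1)/2 + ε) * len < ∑ i, ((z i).val : ℝ))).card : ℝ) := by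
    exact_mod_cast hcard
  have h1 := tail_low q len hq ε hε0
  have h2 := tail_up q len hq ε hε0
  linarith

end Stmt4Aux

open Finset Real

namespace Stmt4Aux

lemma window_count (q m : ℕ) [NeZero q] (ε D : ℝ) (a len : ℕ) (h : a + len ≤ m)
    [DecidablePred (fun z : Fin len → ZMod q =>
        (∑ i, ((z i).val : ℝ)) < (((q:ℝ)-1)/2 - ε) * len ∨
        (((q:ℝ)-1)/2 + ε) * len < ∑ i, ((z i).val : ℝ))]
    [DecidablePred (fun y : Fin m → ZMod q =>
        ((wsub y a len h : ℝ) < (((q:ℝ)-1)/2 - ε) * len ∨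
        (((q:ℝ)-1)/2 + ε) * len < (wsub y a len h : ℝ)))]
    (htail : ((univ.filter (fun z : Fin len → ZMod q =>
        (∑ i, ((z i).val : ℝ)) < (((q:ℝ)-1)/2 - ε) * len ∨
        (((q:ℝ)-1)/2 + ε) * len < ∑ i, ((z i).val : ℝ))).card : ℝ) ≤ 2 * ((q:ℝ)^len * D)) :
    ((univ.filter (fun y : Fin m → ZMod q =>
        ((wsub y a len h : ℝ) < (((q:ℝ)-1)/2 - ε) * len ∨
        (((q:ℝ)-1)/2 + ε) * len < (wsub y a len h : ℝ)))).card : ℝ)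
      ≤ 2 * ((q:ℝ)^m * D) := by
  classical
  set BZ := (univ.filter (fun z : Fin len → ZMod q =>
        (∑ i, ((z i).val : ℝ)) < (((q:ℝ)-1)/2 - ε) * len ∨
        (((q:ℝ)-1)/2 + ε) * len < ∑ i, ((z i).val : ℝ))) with hBZ
  set BY := (univ.filter (fun y : Fin m → ZMod q =>
        ((wsub y a len h : ℝ) < (((q:ℝ)-1)/2 - ε) * len ∨
        (((q:ℝ)-1)/2 + ε) * len < (wsub y a len h : ℝ)))) with hBY
  have hcard : BY.card ≤ (BZ ×ˢ (univ : Finset (Fin (m - len) → ZMod q))).card := by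
    apply Finset.card_le_card_of_injOn
      (fun y => (fun i : Fin len => y ⟨a + (i:ℕ), by omega⟩,
                 fun j : Fin (m - len) => if hj : (j:ℕ) < a then y ⟨(j:ℕ), by omega⟩
                   else y ⟨(j:ℕ) + len, by omega⟩))
    · intro y hy
      rw [Finset.mem_coe, Finset.mem_product]
      constructor
      · rw [hBZ, Finset.mem_filter]
        refine ⟨Finset.mem_univ _, ?_⟩
        rw [hBY, Finset.mem_coe, Finset.mem_filter] at hy
        have hw : (wsub y a len h : ℝ) = ∑ i : Fin len, ((y ⟨a + (i:ℕ), by omega⟩).val : ℝ) := by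
          rw [wsub]; push_cast; rfl
        rw [hw] at hy
        exact hy.2
      · exact Finset.mem_univ _
    · intro y1 hy1 y2 hy2 heq
      simp only [Prod.mk.injEq] at heq
      funext k
      rcases lt_or_ge (k:ℕ) a with hk | hk
      · have := congr_fun heq.2 ⟨(k:ℕ), by omega⟩
        rw [dif_pos hk, dif_pos hk] at this
        simpa [Fin.ext_iff] using this
      · rcases lt_or_ge (k:ℕ) (a + len) with hk2 | hk2
        · have := congr_fun heq.1 ⟨(k:ℕ) - a, by omega⟩
          have hfix : a + ((k:ℕ) - a) = (k:ℕ) := by omega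
          simp only [hfix] at this
          simpa [Fin.ext_iff] using this
        · have := congr_fun heq.2 ⟨(k:ℕ) - len, by omega⟩
          rw [dif_neg (by simp only [Fin.val_mk]; omega),
            dif_neg (by simp only [Fin.val_mk]; omega)] at this
          have hfix : (k:ℕ) - len + len = (k:ℕ) := by omega
          simp only [hfix] at this
          simpa [Fin.ext_iff] using this
  have hprod : (BZ ×ˢ (univ : Finset (Fin (m - len) → ZMod q))).card
      = BZ.card * q ^ (m - len) := by
    rw [Finset.card_product, Finset.card_univ, Fintype.card_pi]
    simp [ZMod.card]
  have hfinal : (BY.card : ℝ) ≤ (BZ.card : ℝ) * (q:ℝ) ^ (m - len) := by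
    have := hcard.trans_eq hprod
    exact_mod_cast this
  refine hfinal.trans ?_
  have hqpow : (0:ℝ) ≤ (q:ℝ) ^ (m - len) := by positivity
  calc (BZ.card : ℝ) * (q:ℝ) ^ (m - len)
      ≤ (2 * ((q:ℝ)^len * D)) * (q:ℝ) ^ (m - len) := by
        exact mul_le_mul_of_nonneg_right htail hqpow
    _ = 2 * (((q:ℝ)^len * (q:ℝ)^(m-len)) * D) := by ring
    _ = 2 * ((q:ℝ)^m * D) := by
        rw [← pow_add]
        congr 3
        omega

lemma xpad_pos {q n : ℕ} (x : Fin n → ZMod q) (k : ℕ) (h1 : 1 ≤ k) (h2 : k ≤ n) :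
    xpad x k = x ⟨k - 1, by omega⟩ := dif_pos ⟨h1, h2⟩

lemma xpad_zero' {q n : ℕ} (x : Fin n → ZMod q) : xpad x 0 = 0 := dif_neg (by omega)

lemma psi_inj (q n : ℕ) (hn : 1 ≤ n) : Function.Injective (psi (q := q) (n := n)) := by
  intro x1 x2 hxy
  have H : ∀ j : ℕ, ∀ hj : j < n, x1 ⟨j, hj⟩ = x2 ⟨j, hj⟩ := by
    intro j
    induction j with
    | zero =>
      intro hj
      have h0 : xpad x1 0 - xpad x1 1 = xpad x2 0 - xpad x2 1 :=
        congr_fun hxy ⟨0, by omega⟩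
      rw [xpad_zero', xpad_zero', xpad_pos x1 1 le_rfl hn, xpad_pos x2 1 le_rfl hn,
        zero_sub, zero_sub, neg_inj] at h0
      exact h0
    | succ j ih =>
      intro hj
      have h0 : x1 ⟨j, by omega⟩ - x1 ⟨j + 1, hj⟩ = x2 ⟨j, by omega⟩ - x2 ⟨j + 1, hj⟩ := by
        have h0' : xpad x1 (j+1) - xpad x1 (j+2) = xpad x2 (j+1) - xpad x2 (j+2) :=
          congr_fun hxy ⟨j+1, by omega⟩
        rw [xpad_pos x1 (j+1) (by omega) (by omega), xpad_pos x2 (j+1) (by omega) (by omega),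
          xpad_pos x1 (j+2) (by omega) (by omega), xpad_pos x2 (j+2) (by omega) (by omega)]
          at h0'
        exact h0'
      rw [ih (by omega)] at h0
      exact (sub_right_inj.1 h0)
  funext k
  have := H k k.isLt
  simpa using this

lemma final_alg (N Q X : ℝ) (hN : N ≠ 0) (hQ : Q ≠ 0) :
    (N * N) * (2 * ((X * Q) * (4 * N^2 * Q)⁻¹)) = X / 2 := by
  field_simp
  ring

end Stmt4Aux

theorem stmt4 (q n : ℕ) (hq : 2 ≤ q) (hn : 2 ≤ n) (ε : ℝ)
    (hε0 : 0 < ε) (hε : ε < ((q : ℝ) - 1) / 2)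
    (ℓ : ℕ) (hℓn : ℓ ≤ n + 1)
    (hℓ : ((q : ℝ) - 1) ^ 2 / ε ^ 2 * Real.log (2 * ((n : ℝ) + 1) * Real.sqrt q) ≤ (ℓ : ℝ)) :
    (q : ℝ) ^ n / 2 ≤
      (Nat.card {x : Fin n → ZMod q // StrongLB (psi x) ℓ ε} : ℝ) := by
  classical
  haveI : NeZero q := ⟨by omega⟩
  have hq1 : (1:ℝ) ≤ (q:ℝ) - 1 := by
    have : (2:ℝ) ≤ q := by exact_mod_cast hq
    linarith
  have hqR : (0:ℝ) < q := by linarith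
  have hn2 : (2:ℝ) ≤ (n:ℝ) := by exact_mod_cast hn
  have hsqrt1 : (1:ℝ) ≤ Real.sqrt q := by
    rw [show (1:ℝ) = Real.sqrt 1 from (Real.sqrt_one).symm]
    exact Real.sqrt_le_sqrt (by linarith)
  have hs1 : 1 < 2*((n:ℝ)+1)*Real.sqrt q := by nlinarith
  have hLpos : 0 < Real.log (2*((n:ℝ)+1)*Real.sqrt q) := Real.log_pos hs1
  have hε2 : (0:ℝ) < ε^2 := by positivity
  have hq1sq : (0:ℝ) < ((q:ℝ)-1)^2 := by positivity
  have hlpos : 0 < ℓ := by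
    by_contra hc
    push_neg at hc
    have hl0 : ℓ = 0 := by omega
    rw [hl0] at hℓ
    simp only [Nat.cast_zero] at hℓ
    nlinarith [mul_pos (div_pos hq1sq hε2) hLpos]
  set D := Real.exp (-(2*ε^2/((q:ℝ)-1)^2) * (ℓ:ℝ)) with hD
  have hD0 : 0 ≤ D := (Real.exp_pos _).le
  -- key per-window bound
  have key : ∀ a len : ℕ, ℓ ≤ len → ∀ h : a + len ≤ n+1,
      ((univ.filter (fun y : Fin (n+1) → ZMod q =>
          ((wsub y a len h : ℝ) < (((q:ℝ)-1)/2 - ε) * len ∨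
          (((q:ℝ)-1)/2 + ε) * len < (wsub y a len h : ℝ)))).card : ℝ)
        ≤ 2 * ((q:ℝ)^(n+1) * D) := by
    intro a len hlen h
    have htail := Stmt4Aux.tail_both q len hq ε hε0
    have h1 := Stmt4Aux.window_count q (n+1) ε
      (Real.exp (-(2*ε^2/((q:ℝ)-1)^2) * (len:ℝ))) a len h htail
    refine h1.trans ?_
    have hll : (ℓ:ℝ) ≤ (len:ℝ) := by exact_mod_cast hlen
    have hcnn : (0:ℝ) ≤ 2*ε^2/((q:ℝ)-1)^2 := by positivity
    have hexp : Real.exp (-(2*ε^2/((q:ℝ)-1)^2) * (len:ℝ)) ≤ D := by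
      rw [hD]
      apply Real.exp_le_exp.2
      nlinarith [mul_nonneg hcnn (sub_nonneg.2 hll)]
    have h2 : (0:ℝ) ≤ (q:ℝ)^(n+1) := by positivity
    nlinarith [mul_nonneg h2 (sub_nonneg.2 hexp)]
  set Wd : Finset (ℕ × ℕ) := (Finset.range (n+1) ×ˢ Finset.Icc 1 (n+1)).filter
      (fun p => ℓ ≤ p.2 ∧ p.1 + p.2 ≤ n+1) with hWd
  set Bad := univ.filter (fun x : Fin n → ZMod q => ¬ StrongLB (psi x) ℓ ε) with hBad
  have cover : Bad ⊆ Wd.biUnion (fun p => univ.filter (fun x : Fin n → ZMod q =>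
      ∃ hx : p.1 + p.2 ≤ n+1,
        ((wsub (psi x) p.1 p.2 hx : ℝ) < (((q:ℝ)-1)/2 - ε) * p.2 ∨
        (((q:ℝ)-1)/2 + ε) * p.2 < (wsub (psi x) p.1 p.2 hx : ℝ)))) := by
    intro x hx
    rw [hBad, Finset.mem_filter] at hx
    have hx2 := hx.2
    rw [StrongLB] at hx2
    push_neg at hx2
    obtain ⟨a, len, hlen, hle, hbad⟩ := hx2
    apply Finset.mem_biUnion.2
    refine ⟨(a, len), ?_, ?_⟩
    · rw [hWd, Finset.mem_filter, Finset.mem_product, Finset.mem_range, Finset.mem_Icc]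
      refine ⟨⟨by omega, by omega, by omega⟩, by omega, by omega⟩
    · rw [Finset.mem_filter]
      refine ⟨Finset.mem_univ _, hle, ?_⟩
      rcases lt_or_ge ((wsub (psi x) a len hle : ℝ)) ((((q:ℝ)-1)/2 - ε) * len) with hca | hca
      · exact Or.inl hca
      · exact Or.inr (hbad hca)
  have hcard1 : (Bad.card : ℝ) ≤ (Wd.card : ℝ) * (2 * ((q:ℝ)^(n+1) * D)) := by
    have hb1 : Bad.card ≤ ∑ p ∈ Wd, (univ.filter (fun x : Fin n → ZMod q =>
        ∃ hx : p.1 + p.2 ≤ n+1,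
          ((wsub (psi x) p.1 p.2 hx : ℝ) < (((q:ℝ)-1)/2 - ε) * p.2 ∨
          (((q:ℝ)-1)/2 + ε) * p.2 < (wsub (psi x) p.1 p.2 hx : ℝ)))).card :=
      (Finset.card_le_card cover).trans Finset.card_biUnion_le
    calc (Bad.card : ℝ)
        ≤ ∑ p ∈ Wd, ((univ.filter (fun x : Fin n → ZMod q =>
            ∃ hx : p.1 + p.2 ≤ n+1,
              ((wsub (psi x) p.1 p.2 hx : ℝ) < (((q:ℝ)-1)/2 - ε) * p.2 ∨
              (((q:ℝ)-1)/2 + ε) * p.2 < (wsub (psi x) p.1 p.2 hx : ℝ)))).card : ℝ) := by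
          exact_mod_cast hb1
      _ ≤ ∑ _p ∈ Wd, (2 * ((q:ℝ)^(n+1) * D)) := by
          apply Finset.sum_le_sum
          intro p hp
          rw [hWd, Finset.mem_filter] at hp
          obtain ⟨-, hpl, hph⟩ := hp
          -- step 1: transfer from x to y via injectivity of psi
          have step1 : (univ.filter (fun x : Fin n → ZMod q =>
              ∃ hx : p.1 + p.2 ≤ n+1,
                ((wsub (psi x) p.1 p.2 hx : ℝ) < (((q:ℝ)-1)/2 - ε) * p.2 ∨
                (((q:ℝ)-1)/2 + ε) * p.2 < (wsub (psi x) p.1 p.2 hx : ℝ)))).card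
              ≤ (univ.filter (fun y : Fin (n+1) → ZMod q =>
              ∃ hx : p.1 + p.2 ≤ n+1,
                ((wsub y p.1 p.2 hx : ℝ) < (((q:ℝ)-1)/2 - ε) * p.2 ∨
                (((q:ℝ)-1)/2 + ε) * p.2 < (wsub y p.1 p.2 hx : ℝ)))).card := by
            apply Finset.card_le_card_of_injOn psi
            · intro x hxx
              rw [Finset.mem_coe, Finset.mem_filter] at hxx ⊢
              exact ⟨Finset.mem_univ _, hxx.2⟩
            · exact (Stmt4Aux.psi_inj q n (by omega)).injOn
          have step2 : (univ.filter (fun y : Fin (n+1) → ZMod q =>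
              ∃ hx : p.1 + p.2 ≤ n+1,
                ((wsub y p.1 p.2 hx : ℝ) < (((q:ℝ)-1)/2 - ε) * p.2 ∨
                (((q:ℝ)-1)/2 + ε) * p.2 < (wsub y p.1 p.2 hx : ℝ))))
              = (univ.filter (fun y : Fin (n+1) → ZMod q =>
                ((wsub y p.1 p.2 hph : ℝ) < (((q:ℝ)-1)/2 - ε) * p.2 ∨
                (((q:ℝ)-1)/2 + ε) * p.2 < (wsub y p.1 p.2 hph : ℝ)))) := by
            apply Finset.filter_congr
            intro y _
            constructor
            · rintro ⟨h', hcc⟩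
              exact hcc
            · intro hcc
              exact ⟨hph, hcc⟩
          have := key p.1 p.2 hpl hph
          calc ((univ.filter (fun x : Fin n → ZMod q =>
              ∃ hx : p.1 + p.2 ≤ n+1,
                ((wsub (psi x) p.1 p.2 hx : ℝ) < (((q:ℝ)-1)/2 - ε) * p.2 ∨
                (((q:ℝ)-1)/2 + ε) * p.2 < (wsub (psi x) p.1 p.2 hx : ℝ)))).card : ℝ)
              ≤ ((univ.filter (fun y : Fin (n+1) → ZMod q =>
              ∃ hx : p.1 + p.2 ≤ n+1,
                ((wsub y p.1 p.2 hx : ℝ) < (((q:ℝ)-1)/2 - ε) * p.2 ∨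
                (((q:ℝ)-1)/2 + ε) * p.2 < (wsub y p.1 p.2 hx : ℝ)))).card : ℝ) := by
                exact_mod_cast step1
            _ = ((univ.filter (fun y : Fin (n+1) → ZMod q =>
                ((wsub y p.1 p.2 hph : ℝ) < (((q:ℝ)-1)/2 - ε) * p.2 ∨
                (((q:ℝ)-1)/2 + ε) * p.2 < (wsub y p.1 p.2 hph : ℝ)))).card : ℝ) := by
                rw [step2]
            _ ≤ 2 * ((q:ℝ)^(n+1) * D) := key p.1 p.2 hpl hph
      _ = (Wd.card : ℝ) * (2 * ((q:ℝ)^(n+1) * D)) := by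
          rw [Finset.sum_const, nsmul_eq_mul]
  have hWcard : (Wd.card : ℝ) ≤ ((n:ℝ)+1) * ((n:ℝ)+1) := by
    have h1 : Wd.card ≤ (n+1) * (n+1) := by
      calc Wd.card ≤ ((Finset.range (n+1)) ×ˢ (Finset.Icc 1 (n+1))).card :=
            Finset.card_le_card (Finset.filter_subset _ _)
        _ = (n+1) * (n+1) := by
            rw [Finset.card_product, Finset.card_range, Nat.card_Icc]
            congr 1
    calc (Wd.card : ℝ) ≤ (((n+1) * (n+1) : ℕ) : ℝ) := by exact_mod_cast h1
      _ = ((n:ℝ)+1) * ((n:ℝ)+1) := by push_cast; ring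
  -- bound on D
  have hspos : (0:ℝ) < 2*((n:ℝ)+1)*Real.sqrt q := by linarith
  have hexpL : Real.exp (Real.log (2*((n:ℝ)+1)*Real.sqrt q)) = 2*((n:ℝ)+1)*Real.sqrt q :=
    Real.exp_log hspos
  have hεne : ε ≠ 0 := ne_of_gt hε0
  have hq1ne : ((q:ℝ)-1) ≠ 0 := by linarith
  have hDle : D ≤ (4*((n:ℝ)+1)^2*(q:ℝ))⁻¹ := by
    have hfac : (2*ε^2/((q:ℝ)-1)^2) * (((q:ℝ)-1)^2/ε^2 * Real.log (2*((n:ℝ)+1)*Real.sqrt q))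
        = 2 * Real.log (2*((n:ℝ)+1)*Real.sqrt q) := by
      field_simp
    have h2L : 2 * Real.log (2*((n:ℝ)+1)*Real.sqrt q) ≤ (2*ε^2/((q:ℝ)-1)^2) * (ℓ:ℝ) := by
      calc 2 * Real.log (2*((n:ℝ)+1)*Real.sqrt q)
          = (2*ε^2/((q:ℝ)-1)^2) * (((q:ℝ)-1)^2/ε^2 * Real.log (2*((n:ℝ)+1)*Real.sqrt q)) :=
            hfac.symm
        _ ≤ (2*ε^2/((q:ℝ)-1)^2) * (ℓ:ℝ) :=
            mul_le_mul_of_nonneg_left hℓ (by positivity)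
    have hsq : (2*((n:ℝ)+1)*Real.sqrt q)^2 = 4*((n:ℝ)+1)^2*(q:ℝ) := by
      rw [mul_pow, mul_pow, Real.sq_sqrt (by linarith : (0:ℝ) ≤ q)]
      ring
    calc D ≤ Real.exp (-(2 * Real.log (2*((n:ℝ)+1)*Real.sqrt q))) := by
          rw [hD]
          apply Real.exp_le_exp.2
          linarith
      _ = ((Real.exp (Real.log (2*((n:ℝ)+1)*Real.sqrt q)))^2)⁻¹ := by
          rw [Real.exp_neg]
          congr 1
          rw [sq, ← Real.exp_add]
          congr 1
          ring
      _ = ((2*((n:ℝ)+1)*Real.sqrt q)^2)⁻¹ := by rw [hexpL]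
      _ = (4*((n:ℝ)+1)^2*(q:ℝ))⁻¹ := by rw [hsq]
  have hbadfinal : (Bad.card : ℝ) ≤ (q:ℝ)^n / 2 := by
    have hqpow : (0:ℝ) ≤ (q:ℝ)^(n+1) := by positivity
    have hn1ne : ((n:ℝ)+1) ≠ 0 := by linarith
    have hqne : (q:ℝ) ≠ 0 := by linarith
    calc (Bad.card : ℝ) ≤ (Wd.card : ℝ) * (2 * ((q:ℝ)^(n+1) * D)) := hcard1
      _ ≤ (((n:ℝ)+1) * ((n:ℝ)+1)) * (2 * ((q:ℝ)^(n+1) * (4*((n:ℝ)+1)^2*(q:ℝ))⁻¹)) := by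
          apply mul_le_mul hWcard _ (by positivity) (by positivity)
          apply mul_le_mul_of_nonneg_left _ (by norm_num : (0:ℝ) ≤ 2)
          exact mul_le_mul_of_nonneg_left hDle hqpow
      _ = (q:ℝ)^n / 2 := by
          rw [pow_succ]
          exact Stmt4Aux.final_alg ((n:ℝ)+1) (q:ℝ) ((q:ℝ)^n) hn1ne hqne
  have hsplit : (univ.filter (fun x : Fin n → ZMod q => StrongLB (psi x) ℓ ε)).card
      + Bad.card = q^n := by
    have hcardX : Fintype.card (Fin n → ZMod q) = q ^ n := by
      rw [Fintype.card_fun, ZMod.card, Fintype.card_fin]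
    rw [hBad, Finset.card_filter_add_card_filter_not, Finset.card_univ, hcardX]
  have hgood : (Nat.card {x : Fin n → ZMod q // StrongLB (psi x) ℓ ε} : ℝ)
      = ((univ.filter (fun x : Fin n → ZMod q => StrongLB (psi x) ℓ ε)).card : ℝ) := by
    rw [Nat.card_eq_fintype_card, Fintype.card_subtype]
  rw [hgood]
  have hsplitR : ((univ.filter (fun x : Fin n → ZMod q => StrongLB (psi x) ℓ ε)).card : ℝ)
      + (Bad.card : ℝ) = (q:ℝ)^n := by
    exact_mod_cast hsplit
  linarith
end

section
/- Let (q,t,ε) be a good triple and let ℓ be an integer with ℓ > M_{q,t,ε}. Let 2 ≤ t′ ≤ t and let y ∈ Σ_q^{n+1} be strong-(ℓ,ε)-locally-balanced. Let 1 ≤ i ≤ n+1−t′ and let y′ ∈ Σ_q^{n+1−t′} be obtained from y by replacing the substring y_{[i,i+t′]} with the single symbol (Σ_{k=i}^{i+t′} y_k) mod q (so y′_k = y_k for k < i, y′_i = (Σ_{k=i}^{i+t′} y_k) mod q, and y′_k = y_{k+t′} for k > i). Set Δ = VT(y) − VT(y′) and Δ_sum = Sum(y) − Sum(y′). Suppose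 j is an index with i ≤ j ≤ n+1−t′ for which there exists an integer σ with 0 ≤ σ ≤ (t′(t′+1)/2)(q−1) such that Δ = j·Δ_sum + σ + t′·Σ_{k=j+1}^{n+1−t′} y′_k. Then j − i < ℓ. -/
/-- The L1-weight of a q-ary sequence. -/
def L1 {q m : ℕ} (y : Fin m → ZMod q) : ℕ := ∑ i, (y i).val

/-- `(q,t,ε)` is a good triple. -/
def GoodTriple (q t : ℕ) (ε : ℝ) : Prop :=
  ∀ t' : ℕ, 2 ≤ t' → t' ≤ t →
    ∃ s : ℕ, 1 ≤ s ∧ s ≤ t' ∧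
      (t' : ℝ) / 2 - (1 - 2 * ε) * (t' : ℝ) / (2 * (q : ℝ)) < (s : ℝ) ∧
      (s : ℝ) < (t' : ℝ) / 2 + 1 - (1 + 2 * ε) * (t' : ℝ) / (2 * (q : ℝ))

/-- `M_{q,t,ε}` for a good triple. -/
noncomputable def Mval (q t : ℕ) (ε : ℝ) : ℝ :=
  sSup {M : ℝ | ∃ t' s : ℕ, 2 ≤ t' ∧ t' ≤ t ∧ 1 ≤ s ∧ s ≤ t' ∧
    ((t' : ℝ) / 2 - (1 - 2 * ε) * (t' : ℝ) / (2 * (q : ℝ)) < (s : ℝ) ∧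
      (s : ℝ) < (t' : ℝ) / 2 + 1 - (1 + 2 * ε) * (t' : ℝ) / (2 * (q : ℝ))) ∧
    (M = (t' : ℝ) * ((t' : ℝ) + 1) * ((q : ℝ) - 1) /
        (2 * (s : ℝ) * (q : ℝ) - (t' : ℝ) * ((q : ℝ) - 1 + 2 * ε)) ∨
     M = (t' : ℝ) * ((t' : ℝ) + 1) * ((q : ℝ) - 1) /
        ((t' : ℝ) * ((q : ℝ) - 1 - 2 * ε) - 2 * ((s : ℝ) - 1) * (q : ℝ)))}


private lemma aux_bdd (q t : ℕ) (ε : ℝ) :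
    BddAbove {M : ℝ | ∃ t' s : ℕ, 2 ≤ t' ∧ t' ≤ t ∧ 1 ≤ s ∧ s ≤ t' ∧
      ((t' : ℝ) / 2 - (1 - 2 * ε) * (t' : ℝ) / (2 * (q : ℝ)) < (s : ℝ) ∧
        (s : ℝ) < (t' : ℝ) / 2 + 1 - (1 + 2 * ε) * (t' : ℝ) / (2 * (q : ℝ))) ∧
      (M = (t' : ℝ) * ((t' : ℝ) + 1) * ((q : ℝ) - 1) /
          (2 * (s : ℝ) * (q : ℝ) - (t' : ℝ) * ((q : ℝ) - 1 + 2 * ε)) ∨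
       M = (t' : ℝ) * ((t' : ℝ) + 1) * ((q : ℝ) - 1) /
          ((t' : ℝ) * ((q : ℝ) - 1 - 2 * ε) - 2 * ((s : ℝ) - 1) * (q : ℝ)))} := by
  classical
  have hsub : {M : ℝ | ∃ t' s : ℕ, 2 ≤ t' ∧ t' ≤ t ∧ 1 ≤ s ∧ s ≤ t' ∧
      ((t' : ℝ) / 2 - (1 - 2 * ε) * (t' : ℝ) / (2 * (q : ℝ)) < (s : ℝ) ∧
        (s : ℝ) < (t' : ℝ) / 2 + 1 - (1 + 2 * ε) * (t' : ℝ) / (2 * (q : ℝ))) ∧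
      (M = (t' : ℝ) * ((t' : ℝ) + 1) * ((q : ℝ) - 1) /
          (2 * (s : ℝ) * (q : ℝ) - (t' : ℝ) * ((q : ℝ) - 1 + 2 * ε)) ∨
       M = (t' : ℝ) * ((t' : ℝ) + 1) * ((q : ℝ) - 1) /
          ((t' : ℝ) * ((q : ℝ) - 1 - 2 * ε) - 2 * ((s : ℝ) - 1) * (q : ℝ)))} ⊆
      ↑(((Finset.range (t+1)) ×ˢ (Finset.range (t+1)) ×ˢ (Finset.univ : Finset Bool)).image
        (fun p : ℕ × ℕ × Bool =>
          if p.2.2 then (p.1 : ℝ) * ((p.1 : ℝ) + 1) * ((q : ℝ) - 1) /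
              (2 * (p.2.1 : ℝ) * (q : ℝ) - (p.1 : ℝ) * ((q : ℝ) - 1 + 2 * ε))
          else (p.1 : ℝ) * ((p.1 : ℝ) + 1) * ((q : ℝ) - 1) /
              ((p.1 : ℝ) * ((q : ℝ) - 1 - 2 * ε) - 2 * ((p.2.1 : ℝ) - 1) * (q : ℝ)))) := by
    rintro M ⟨t', s, h1, h2, h3, h4, _, (h6 | h6)⟩
    · refine Finset.mem_coe.2 (Finset.mem_image.2 ⟨(t', s, true), ?_, ?_⟩)
      · simp only [Finset.mem_product, Finset.mem_range, Finset.mem_univ, and_true]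
        omega
      · simp [h6]
    · refine Finset.mem_coe.2 (Finset.mem_image.2 ⟨(t', s, false), ?_, ?_⟩)
      · simp only [Finset.mem_product, Finset.mem_range, Finset.mem_univ, and_true]
        omega
      · simp [h6]
  exact (Finset.bddAbove _).mono hsub

set_option maxHeartbeats 1600000 in
/-- If `y'` is obtained from the strong-(ℓ,ε)-locally-balanced `y ∈ Σ_q^{n+1}` by
replacing the substring `y_{[i,i+t']}` (1-based) with the single symbol
`(Σ_{k=i}^{i+t'} y_k) mod q`, and `j ≥ i` satisfies the displayed VT equation for
some `σ ∈ [0, (t'(t'+1)/2)(q-1)]`, then `j - i < ℓ`. -/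
theorem stmt12 (q t t' n : ℕ) (hq : 2 ≤ q) (ht2 : 2 ≤ t') (htt : t' ≤ t)
    (ε : ℝ) (hε0 : 0 < ε) (hε : ε < min ((q : ℝ) / (2 * (t : ℝ))) (1 / 2))
    (hgood : GoodTriple q t ε)
    (ℓ : ℕ) (hℓ : Mval q t ε < (ℓ : ℝ))
    (htn : t' ≤ n)
    (y : Fin (n + 1) → ZMod q) (hy : StrongLB y ℓ ε)
    (i : ℕ) (hi1 : 1 ≤ i) (hi2 : i ≤ n + 1 - t')
    (y' : Fin (n + 1 - t') → ZMod q)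
    (hy' : ∀ k : Fin (n + 1 - t'),
      ((k : ℕ) + 1 < i → y' k = y ⟨(k : ℕ), by omega⟩) ∧
      ((k : ℕ) + 1 = i → y' k = ∑ r : Fin (t' + 1), y ⟨(k : ℕ) + (r : ℕ), by omega⟩) ∧
      (i < (k : ℕ) + 1 → y' k = y ⟨(k : ℕ) + t', by omega⟩))
    (j : ℕ) (hij : i ≤ j) (hj : j ≤ n + 1 - t')
    (σ : ℤ) (hσ0 : 0 ≤ σ) (hσ1 : σ ≤ ((t' * (t' + 1) / 2 : ℕ) : ℤ) * ((q : ℤ) - 1))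
    (hjeq : (VTsum y : ℤ) - (VTsum y' : ℤ) =
      (j : ℤ) * ((L1 y : ℤ) - (L1 y' : ℤ)) + σ +
      (t' : ℤ) * ∑ k : Fin (n + 1 - t'), (if j ≤ (k : ℕ) then ((y' k).val : ℤ) else 0)) :
    j - i < ℓ := by
  by_contra hcon
  push_neg at hcon
  haveI : NeZero q := ⟨by omega⟩
  set i0 := i - 1 with hi0
  set d := j - i with hd
  set L := (n + 1 - t') - i with hLdef
  set Lj := (n + 1 - t') - j with hLjdef
  set v : ℕ → ℕ := fun k => if h : k < n + 1 then (y ⟨k, h⟩).val else 0 with hv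
  set w : ℕ → ℕ := fun k => if h : k < n + 1 - t' then (y' ⟨k, h⟩).val else 0 with hw
  have hvFin : ∀ k : Fin (n+1), v (k : ℕ) = (y k).val := by
    intro k; simp only [hv]; rw [dif_pos k.isLt]
  have hwFin : ∀ k : Fin (n+1-t'), w (k : ℕ) = (y' k).val := by
    intro k; simp only [hw]; rw [dif_pos k.isLt]
  have hvlt : ∀ k, v k ≤ q - 1 := by
    intro k; simp only [hv]; split
    · next h => have := ZMod.val_lt (y ⟨k, h⟩); omega
    · omega
  have hi0m : i0 < n + 1 - t' := by omega
  set S := ∑ r ∈ Finset.range (t'+1), v (i0 + r) with hS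
  set a := S / q with ha
  have hw1 : ∀ k, k < i0 → w k = v k := by
    intro k hk
    have hk2 : k < n + 1 - t' := by omega
    have he := (hy' ⟨k, hk2⟩).1 (show k + 1 < i by omega)
    simp only [hw, hv]
    rw [dif_pos hk2, he, dif_pos (show k < n + 1 by omega)]
  have hw2 : w i0 = S % q := by
    have hmid := (hy' ⟨i0, hi0m⟩).2.1 (show i0 + 1 = i by omega)
    have e1 : y' ⟨i0, hi0m⟩ = ((S : ℕ) : ZMod q) := by
      rw [hmid, hS]
      push_cast
      rw [← Fin.sum_univ_eq_sum_range (fun r => ((v (i0 + r) : ℕ) : ZMod q)) (t'+1)]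
      refine Finset.sum_congr rfl fun r _ => ?_
      have hlt : i0 + (r : ℕ) < n + 1 := by omega
      simp only [hv]
      rw [dif_pos hlt]
      exact (ZMod.natCast_rightInverse _).symm
    simp only [hw]
    rw [dif_pos hi0m, e1, ZMod.val_natCast]
  have hw3 : ∀ k, k < n + 1 - t' → i ≤ k → w k = v (k + t') := by
    intro k hk hik
    have he := (hy' ⟨k, hk⟩).2.2 (show i < k + 1 by omega)
    simp only [hw, hv]
    rw [dif_pos hk, he, dif_pos (show k + t' < n + 1 by omega)]
  -- range-sum versions of the four quantities
  have hVTy : (VTsum y : ℤ) = ∑ k ∈ Finset.range (n+1), (((k:ℤ)+1) * (v k : ℤ)) := by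
    simp only [VTsum]
    push_cast
    rw [← Fin.sum_univ_eq_sum_range (fun k => (((k:ℤ)+1) * (v k : ℤ))) (n+1)]
    exact Finset.sum_congr rfl fun k _ => by rw [hvFin]
  have hVTy' : (VTsum y' : ℤ) = ∑ k ∈ Finset.range (n+1-t'), (((k:ℤ)+1) * (w k : ℤ)) := by
    simp only [VTsum]
    push_cast
    rw [← Fin.sum_univ_eq_sum_range (fun k => (((k:ℤ)+1) * (w k : ℤ))) (n+1-t')]
    exact Finset.sum_congr rfl fun k _ => by rw [hwFin]
  have hL1y : (L1 y : ℤ) = ∑ k ∈ Finset.range (n+1), (v k : ℤ) := by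
    simp only [L1]
    push_cast
    rw [← Fin.sum_univ_eq_sum_range (fun k => (v k : ℤ)) (n+1)]
    exact Finset.sum_congr rfl fun k _ => by rw [hvFin]
  have hL1y' : (L1 y' : ℤ) = ∑ k ∈ Finset.range (n+1-t'), (w k : ℤ) := by
    simp only [L1]
    push_cast
    rw [← Fin.sum_univ_eq_sum_range (fun k => (w k : ℤ)) (n+1-t')]
    exact Finset.sum_congr rfl fun k _ => by rw [hwFin]
  have hTailFin : (∑ k : Fin (n+1-t'), (if j ≤ (k:ℕ) then ((y' k).val : ℤ) else 0))
      = ∑ k ∈ Finset.range (n+1-t'), (if j ≤ k then (w k : ℤ) else 0) := by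
    rw [← Fin.sum_univ_eq_sum_range (fun k => if j ≤ k then (w k : ℤ) else 0) (n+1-t')]
    exact Finset.sum_congr rfl fun k _ => by rw [hwFin]
  -- splitting lemmas
  have hsplit1 : ∀ f : ℕ → ℤ, ∑ k ∈ Finset.range (n+1), f k
      = (∑ k ∈ Finset.range i0, f k) + ((∑ r ∈ Finset.range (t'+1), f (i0+r))
        + ∑ k ∈ Finset.range L, f (i0 + ((t'+1) + k))) := by
    intro f
    rw [show n+1 = i0 + ((t'+1) + L) by omega, Finset.sum_range_add, Finset.sum_range_add]
  have hsplit2 : ∀ f : ℕ → ℤ, ∑ k ∈ Finset.range (n+1-t'), f k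
      = (∑ k ∈ Finset.range i0, f k) + (f i0 + ∑ k ∈ Finset.range L, f (i0 + (1 + k))) := by
    intro f
    rw [show n+1-t' = i0 + (1 + L) by omega, Finset.sum_range_add, Finset.sum_range_add]
    simp
  have hsplit3 : ∀ f : ℕ → ℤ, ∑ k ∈ Finset.range (n+1-t'), (if j ≤ k then f k else 0)
      = ∑ k ∈ Finset.range Lj, f (j + k) := by
    intro f
    rw [show n+1-t' = j + Lj by omega, Finset.sum_range_add]
    rw [Finset.sum_eq_zero (fun k hk => if_neg (by simp only [Finset.mem_range] at hk; omega)),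
      zero_add]
    exact Finset.sum_congr rfl fun k _ => if_pos (by omega)
  set Wnat := ∑ k ∈ Finset.range d, v (i + t' + k) with hWnat
  set Tnat := ∑ k ∈ Finset.range Lj, v (j + t' + k) with hTnat
  set σ0z : ℤ := ∑ r ∈ Finset.range (t'+1), (r:ℤ) * (v (i0+r) : ℤ) with hσ0z
  -- middle chunk of VT y
  have hmid2 : ∑ r ∈ Finset.range (t'+1), (((i0 + r : ℕ):ℤ)+1) * (v (i0+r):ℤ)
      = (i:ℤ) * (S:ℤ) + σ0z := by
    have hSz : (S : ℤ) = ∑ r ∈ Finset.range (t'+1), (v (i0+r) : ℤ) := by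
      rw [hS]; push_cast; rfl
    rw [hSz, Finset.mul_sum, hσ0z, ← Finset.sum_add_distrib]
    refine Finset.sum_congr rfl fun r _ => ?_
    have hi0z : (i0:ℤ) = (i:ℤ) - 1 := by omega
    push_cast
    rw [hi0z]; ring
  -- total tail sum equals Wnat + Tnat
  have e5 : ∑ k ∈ Finset.range L, (v (i + t' + k) : ℤ) = (Wnat : ℤ) + (Tnat : ℤ) := by
    rw [hWnat, hTnat]
    push_cast
    rw [show L = d + Lj by omega, Finset.sum_range_add]
    congr 1
    refine Finset.sum_congr rfl fun k _ => ?_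
    rw [show i + t' + (d + k) = j + t' + k by omega]
  have hVT : (VTsum y : ℤ) - (VTsum y' : ℤ)
      = (i:ℤ) * ((S:ℤ) - ((S % q : ℕ):ℤ)) + σ0z + (t':ℤ) * ((Wnat:ℤ) + (Tnat:ℤ)) := by
    rw [hVTy, hVTy', hsplit1, hsplit2, hmid2]
    have e2 : ∑ k ∈ Finset.range L, (((i0 + ((t'+1)+k) : ℕ):ℤ)+1) * (v (i0+((t'+1)+k)):ℤ)
        = ∑ k ∈ Finset.range L, (((i:ℤ)+(t':ℤ)+1+(k:ℤ)) * (v (i+t'+k):ℤ)) := by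
      refine Finset.sum_congr rfl fun k _ => ?_
      rw [show i0 + ((t'+1)+k) = i + t' + k by omega]
      push_cast; ring
    have e3 : ∑ k ∈ Finset.range L, (((i0 + (1+k) : ℕ):ℤ)+1) * (w (i0+(1+k)):ℤ)
        = ∑ k ∈ Finset.range L, (((i:ℤ)+1+(k:ℤ)) * (v (i+t'+k):ℤ)) := by
      refine Finset.sum_congr rfl fun k hk => ?_
      have hkL : k < L := Finset.mem_range.mp hk
      rw [hw3 (i0+(1+k)) (by omega) (by omega), show i0 + (1+k) + t' = i + t' + k by omega]
      rw [show i0 + (1+k) = i + k by omega]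
      push_cast; ring
    have e4 : (((i0:ℕ):ℤ)+1) * (w i0 : ℤ) = (i:ℤ) * ((S % q : ℕ):ℤ) := by
      rw [hw2]
      have hi0z : (i0:ℤ) = (i:ℤ) - 1 := by omega
      rw [hi0z]; ring
    rw [e2, e3, e4]
    have e1 : ∑ k ∈ Finset.range i0, (((k:ℕ):ℤ)+1) * (w k : ℤ)
        = ∑ k ∈ Finset.range i0, (((k:ℕ):ℤ)+1) * (v k : ℤ) := by
      refine Finset.sum_congr rfl fun k hk => ?_
      rw [hw1 k (Finset.mem_range.mp hk)]
    rw [e1]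
    have e7 : ∑ k ∈ Finset.range L, (((i:ℤ)+(t':ℤ)+1+(k:ℤ)) * (v (i+t'+k):ℤ))
        = (∑ k ∈ Finset.range L, (((i:ℤ)+1+(k:ℤ)) * (v (i+t'+k):ℤ)))
          + (t':ℤ) * ((Wnat:ℤ) + (Tnat:ℤ)) := by
      rw [← e5, Finset.mul_sum, ← Finset.sum_add_distrib]
      exact Finset.sum_congr rfl fun k _ => by ring
    rw [e7]; ring
  have hL1 : (L1 y : ℤ) - (L1 y' : ℤ) = (S:ℤ) - ((S % q : ℕ):ℤ) := by
    rw [hL1y, hL1y', hsplit1, hsplit2]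
    have hSz : (S : ℤ) = ∑ r ∈ Finset.range (t'+1), (v (i0+r) : ℤ) := by
      rw [hS]; push_cast; rfl
    have e2 : ∑ k ∈ Finset.range L, (v (i0+((t'+1)+k)) : ℤ)
        = ∑ k ∈ Finset.range L, (v (i+t'+k) : ℤ) :=
      Finset.sum_congr rfl fun k _ => by congr 2; omega
    have e3 : ∑ k ∈ Finset.range L, (w (i0+(1+k)) : ℤ)
        = ∑ k ∈ Finset.range L, (v (i+t'+k) : ℤ) := by
      refine Finset.sum_congr rfl fun k hk => ?_
      have hkL : k < L := Finset.mem_range.mp hk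
      rw [hw3 (i0+(1+k)) (by omega) (by omega)]
      congr 2; omega
    have e4 : (w i0 : ℤ) = ((S % q : ℕ):ℤ) := by rw [hw2]
    have e1 : ∑ k ∈ Finset.range i0, (w k : ℤ)
        = ∑ k ∈ Finset.range i0, (v k : ℤ) := by
      refine Finset.sum_congr rfl fun k hk => ?_
      rw [hw1 k (Finset.mem_range.mp hk)]
    rw [e1, e2, e3, e4, ← hSz]
    ring
  have hTailfull : (∑ k : Fin (n+1-t'), (if j ≤ (k:ℕ) then ((y' k).val : ℤ) else 0))
      = (Tnat : ℤ) := by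
    rw [hTailFin, hsplit3 (fun k => (w k : ℤ)), hTnat]
    push_cast
    refine Finset.sum_congr rfl fun k hk => ?_
    have hkL : k < Lj := Finset.mem_range.mp hk
    rw [hw3 (j+k) (by omega) (by omega)]
    congr 2; omega
  rw [hVT, hL1, hTailfull] at hjeq
  have hX : (S:ℤ) - ((S % q : ℕ):ℤ) = (q:ℤ) * ((a:ℕ) : ℤ) := by
    have h := Nat.mod_add_div S q
    have h2 : ((S % q : ℕ):ℤ) + (q:ℤ) * ((a:ℕ):ℤ) = (S:ℤ) := by rw [ha]; exact_mod_cast h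
    linarith
  have hdz : (j:ℤ) = (i:ℤ) + (d:ℤ) := by omega
  have key : (t':ℤ) * (Wnat:ℤ) = (d:ℤ) * ((q:ℤ) * ((a:ℕ):ℤ)) + σ - σ0z := by
    linear_combination hjeq + (d:ℤ) * hX + ((S:ℤ) - ((S % q : ℕ):ℤ)) * hdz
    -- bounds on σ0z
  have hσ0nn : 0 ≤ σ0z := Finset.sum_nonneg fun r _ => by positivity
  have hTdvd : t' * (t'+1) / 2 * 2 = t' * (t'+1) :=
    Nat.div_mul_cancel (Nat.even_mul_succ_self t').two_dvd
  have hgauss : (∑ r ∈ Finset.range (t'+1), (r:ℤ)) = ((t' * (t'+1) / 2 : ℕ) : ℤ) := by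
    have h1 := Finset.sum_range_id_mul_two (t'+1)
    have h3 : (∑ r ∈ Finset.range (t'+1), r) = t' * (t'+1) / 2 := by
      have h4 : (∑ r ∈ Finset.range (t'+1), r) * 2 = (t' * (t'+1) / 2) * 2 := by
        rw [h1, hTdvd, Nat.add_sub_cancel]; ring
      omega
    rw [← h3]; push_cast; rfl
  have hσ0ub : σ0z ≤ ((t' * (t'+1) / 2 : ℕ) : ℤ) * ((q:ℤ) - 1) := by
    rw [hσ0z]
    calc ∑ r ∈ Finset.range (t'+1), (r:ℤ) * (v (i0+r) : ℤ)
        ≤ ∑ r ∈ Finset.range (t'+1), (r:ℤ) * ((q:ℤ)-1) := by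
          refine Finset.sum_le_sum fun r _ => ?_
          have h := hvlt (i0+r)
          have h2 : ((v (i0+r) : ℕ):ℤ) ≤ (q:ℤ)-1 := by omega
          exact mul_le_mul_of_nonneg_left h2 (by positivity)
      _ = (∑ r ∈ Finset.range (t'+1), (r:ℤ)) * ((q:ℤ)-1) := by rw [← Finset.sum_mul]
      _ = _ := by rw [hgauss]
  -- real versions
  have hq0 : (0:ℝ) < (q:ℝ) := by exact_mod_cast (by omega : 0 < q)
  have h2q : (0:ℝ) < 2*(q:ℝ) := by linarith
  have hld : ℓ ≤ d := hcon
  have hwin : (i + t') + d ≤ n + 1 := by omega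
  have hbal := hy (i+t') d hld hwin
  have hwsub : wsub y (i+t') d hwin = Wnat := by
    have e : Wnat = ∑ k : Fin d, v (i+t'+(k:ℕ)) :=
      (Fin.sum_univ_eq_sum_range (fun k => v (i+t'+k)) d).symm
    rw [wsub, e]
    refine Finset.sum_congr rfl fun k _ => ?_
    simp only [hv]
    rw [dif_pos (show i+t'+(k:ℕ) < n+1 by omega)]
  rw [hwsub] at hbal
  have keyR : (t':ℝ) * (Wnat:ℝ) = (d:ℝ) * ((q:ℝ) * (a:ℝ)) + (σ:ℝ) - ((σ0z:ℤ):ℝ) := by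
    exact_mod_cast key
  have hσ0nnR : (0:ℝ) ≤ ((σ0z:ℤ):ℝ) := by exact_mod_cast hσ0nn
  have hσ0ubR : ((σ0z:ℤ):ℝ) ≤ ((t' * (t'+1) / 2 : ℕ) : ℝ) * ((q:ℝ) - 1) := by
    have h : ((σ0z:ℤ):ℝ) ≤ ((((t' * (t'+1) / 2 : ℕ) : ℤ) * ((q:ℤ) - 1) : ℤ) : ℝ) :=
      Int.cast_le.mpr hσ0ub
    push_cast at h
    exact h
  have hσnnR : (0:ℝ) ≤ (σ:ℝ) := by exact_mod_cast hσ0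
  have hσubR : (σ:ℝ) ≤ ((t' * (t'+1) / 2 : ℕ) : ℝ) * ((q:ℝ) - 1) := by
    have h : ((σ:ℤ):ℝ) ≤ ((((t' * (t'+1) / 2 : ℕ) : ℤ) * ((q:ℤ) - 1) : ℤ) : ℝ) :=
      Int.cast_le.mpr hσ1
    push_cast at h
    exact h
  have hTRq : ((t' * (t'+1) / 2 : ℕ) : ℝ) * ((q:ℝ)-1) * 2 = (t':ℝ)*((t':ℝ)+1)*((q:ℝ)-1) := by
    have h5 : ((t' * (t'+1) / 2 : ℕ) : ℝ) * 2 = (t':ℝ)*((t':ℝ)+1) := by exact_mod_cast hTdvd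
    linear_combination ((q:ℝ)-1) * h5
  obtain ⟨s, hs1, hs2, hlt1, hlt2⟩ := hgood t' ht2 htt
  have key1 : (t':ℝ) * ((q:ℝ) - 1 + 2*ε) < 2*(s:ℝ)*(q:ℝ) := by
    have e0 : (t':ℝ)/2 - (s:ℝ) < (1 - 2*ε) * (t':ℝ) / (2*(q:ℝ)) := by linarith
    have e1 := (lt_div_iff₀ h2q).mp e0
    nlinarith [e1]
  have key2 : 2*((s:ℝ)-1)*(q:ℝ) < (t':ℝ) * ((q:ℝ) - 1 - 2*ε) := by
    have e0 : (1 + 2*ε) * (t':ℝ) / (2*(q:ℝ)) < (t':ℝ)/2 + 1 - (s:ℝ) := by linarith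
    have e1 := (div_lt_iff₀ h2q).mp e0
    nlinarith [e1]
  have hdR0 : (0:ℝ) ≤ (d:ℝ) := Nat.cast_nonneg d
  have ht'R : (0:ℝ) ≤ (t':ℝ) := Nat.cast_nonneg t'
  have hldR : (ℓ:ℝ) ≤ (d:ℝ) := by exact_mod_cast hld
  rcases le_or_gt s a with hsa | hsa
  · have haR : (s:ℝ) ≤ (a:ℝ) := by exact_mod_cast hsa
    have h1 : (t':ℝ) * (Wnat:ℝ) ≤ (t':ℝ) * ((((q:ℝ)-1)/2 + ε) * (d:ℝ)) :=
      mul_le_mul_of_nonneg_left hbal.2 ht'R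
    have h2 : (0:ℝ) ≤ 2*(q:ℝ)*(d:ℝ)*((a:ℝ) - (s:ℝ)) :=
      mul_nonneg (mul_nonneg (by linarith) hdR0) (by linarith)
    have hDs : (0:ℝ) < 2*(s:ℝ)*(q:ℝ) - (t':ℝ)*((q:ℝ)-1+2*ε) := by linarith
    have hmain : (d:ℝ) * (2*(s:ℝ)*(q:ℝ) - (t':ℝ)*((q:ℝ)-1+2*ε))
        ≤ (t':ℝ)*((t':ℝ)+1)*((q:ℝ)-1) := by
      nlinarith [keyR, h1, h2, hσ0ubR, hσnnR, hTRq]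
    have hdle : (d:ℝ) ≤ (t':ℝ) * ((t':ℝ) + 1) * ((q:ℝ) - 1) /
        (2 * (s:ℝ) * (q:ℝ) - (t':ℝ) * ((q:ℝ) - 1 + 2 * ε)) :=
      (le_div_iff₀ hDs).mpr hmain
    have hmem : (t':ℝ) * ((t':ℝ) + 1) * ((q:ℝ) - 1) /
        (2 * (s:ℝ) * (q:ℝ) - (t':ℝ) * ((q:ℝ) - 1 + 2 * ε)) ≤ Mval q t ε := by
      rw [Mval]
      exact le_csSup (aux_bdd q t ε) ⟨t', s, ht2, htt, hs1, hs2, ⟨hlt1, hlt2⟩, Or.inl rfl⟩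
    linarith
  · have haR : (a:ℝ) ≤ (s:ℝ) - 1 := by
      have h6 : a + 1 ≤ s := hsa
      have h7 : (a:ℝ) + 1 ≤ (s:ℝ) := by exact_mod_cast h6
      linarith
    have h1 : (t':ℝ) * ((((q:ℝ)-1)/2 - ε) * (d:ℝ)) ≤ (t':ℝ) * (Wnat:ℝ) :=
      mul_le_mul_of_nonneg_left hbal.1 ht'R
    have h2 : (0:ℝ) ≤ 2*(q:ℝ)*(d:ℝ)*(((s:ℝ)-1) - (a:ℝ)) :=
      mul_nonneg (mul_nonneg (by linarith) hdR0) (by linarith)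
    have hDs : (0:ℝ) < (t':ℝ)*((q:ℝ)-1-2*ε) - 2*((s:ℝ)-1)*(q:ℝ) := by linarith
    have hmain : (d:ℝ) * ((t':ℝ)*((q:ℝ)-1-2*ε) - 2*((s:ℝ)-1)*(q:ℝ))
        ≤ (t':ℝ)*((t':ℝ)+1)*((q:ℝ)-1) := by
      nlinarith [keyR, h1, h2, hσ0nnR, hσubR, hTRq]
    have hdle : (d:ℝ) ≤ (t':ℝ) * ((t':ℝ) + 1) * ((q:ℝ) - 1) /
        ((t':ℝ) * ((q:ℝ) - 1 - 2 * ε) - 2 * ((s:ℝ) - 1) * (q:ℝ)) :=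
      (le_div_iff₀ hDs).mpr hmain
    have hmem : (t':ℝ) * ((t':ℝ) + 1) * ((q:ℝ) - 1) /
        ((t':ℝ) * ((q:ℝ) - 1 - 2 * ε) - 2 * ((s:ℝ) - 1) * (q:ℝ)) ≤ Mval q t ε := by
      rw [Mval]
      exact le_csSup (aux_bdd q t ε) ⟨t', s, ht2, htt, hs1, hs2, ⟨hlt1, hlt2⟩, Or.inr rfl⟩
    linarith
end

section
/- Let q ≥ 2 be an integer and let 0 < η₁, η₂ < (q−1)/2 be reals satisfying η₁ − η₁²/((q−1)s) + (q−1)/(4s) ≤ η₂ < (q−1)/2 for some real s ≥ 1. Let ℓ₁ ≤ n be positive integers and suppose x ∈ Σ_q^n has the property that every substring of x of length exactly ℓ₁ has L1-weight in the interval [((q−1)/2 − η₁)ℓ₁, ((q−1)/2 + η₁)ℓ₁]. Then x is strong-(ℓ,η₂)-locally-balanced for every integer ℓ with sℓ₁ ≤ ℓ ≤ n. -/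
/-- Weight of a single position, defaulting to 0 out of range. -/
def wval {q m : ℕ} (y : Fin m → ZMod q) (j : ℕ) : ℕ :=
  if h : j < m then (y ⟨j, h⟩).val else 0

lemma wsub_eq_sum {q m : ℕ} (y : Fin m → ZMod q) (a len : ℕ) (h : a + len ≤ m) :
    wsub y a len h = ∑ i ∈ Finset.range len, wval y (a + i) := by
  unfold wsub
  rw [← Fin.sum_univ_eq_sum_range (fun i => wval y (a + i)) len]
  apply Finset.sum_congr rfl
  intro i _
  have hi : a + (i : ℕ) < m := by omega
  simp [wval, dif_pos hi]

lemma wval_le {q m : ℕ} (hq : 1 ≤ q) (y : Fin m → ZMod q) (j : ℕ) :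
    wval y j ≤ q - 1 := by
  haveI : NeZero q := ⟨by omega⟩
  unfold wval
  split
  · have := ZMod.val_lt (y ⟨j, by assumption⟩)
    omega
  · omega

set_option maxHeartbeats 1000000 in
theorem stmt16 (q : ℕ) (hq : 2 ≤ q) (η₁ η₂ s : ℝ) (hs : 1 ≤ s)
    (hη₁0 : 0 < η₁) (hη₁ : η₁ < ((q : ℝ) - 1) / 2)
    (hη₂0 : 0 < η₂) (hη₂ : η₂ < ((q : ℝ) - 1) / 2)
    (hcond : η₁ - η₁ ^ 2 / (((q : ℝ) - 1) * s) + ((q : ℝ) - 1) / (4 * s) ≤ η₂)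
    (ℓ₁ n : ℕ) (hℓ₁ : 1 ≤ ℓ₁) (hℓ₁n : ℓ₁ ≤ n)
    (x : Fin n → ZMod q)
    (hx : ∀ a : ℕ, ∀ h : a + ℓ₁ ≤ n,
      (((q : ℝ) - 1) / 2 - η₁) * (ℓ₁ : ℝ) ≤ (wsub x a ℓ₁ h : ℝ) ∧
      (wsub x a ℓ₁ h : ℝ) ≤ (((q : ℝ) - 1) / 2 + η₁) * (ℓ₁ : ℝ))
    (ℓ : ℕ) (hℓ : s * (ℓ₁ : ℝ) ≤ (ℓ : ℝ)) (hℓn : ℓ ≤ n) :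
    StrongLB x ℓ η₂ := by
  have hQ : (0:ℝ) < (q:ℝ) - 1 := by
    have : (2:ℝ) ≤ (q:ℝ) := by exact_mod_cast hq
    linarith
  have hL0 : (0:ℝ) < (ℓ₁:ℝ) := by exact_mod_cast hℓ₁
  have hs0 : (0:ℝ) < s := by linarith
  -- the key inequality derived from hcond
  have key : ((q:ℝ)-1)^2/4 - η₁^2 ≤ (η₂ - η₁) * (((q:ℝ)-1) * s) := by
    have h1 : η₁^2 / (((q:ℝ)-1)*s) * (((q:ℝ)-1)*s) = η₁^2 := by
      field_simp
    have h2 : ((q:ℝ)-1) / (4*s) * (((q:ℝ)-1)*s) = ((q:ℝ)-1)^2/4 := by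
      field_simp
    nlinarith [mul_le_mul_of_nonneg_right hcond (le_of_lt (mul_pos hQ hs0))]
  have hE0 : 0 ≤ η₂ - η₁ := by
    nlinarith [mul_pos hQ hs0]
  -- ℓ₁ ≤ ℓ
  have hℓ₁ℓ : ℓ₁ ≤ ℓ := by
    have : (ℓ₁:ℝ) ≤ (ℓ:ℝ) := le_trans (by nlinarith) hℓ
    exact_mod_cast this
  -- local weight function
  set W : ℕ → ℕ → ℕ := fun a len => ∑ i ∈ Finset.range len, wval x (a + i) with hW
  have hWadd : ∀ a l1 l2, W a (l1 + l2) = W a l1 + W (a + l1) l2 := by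
    intro a l1 l2
    simp only [hW]
    rw [Finset.sum_range_add]
    congr 1
    apply Finset.sum_congr rfl
    intro i _
    rw [add_assoc]
  have hWle : ∀ a l, (W a l : ℝ) ≤ ((q:ℝ) - 1) * l := by
    intro a l
    have : W a l ≤ (q-1) * l := by
      simp only [hW]
      calc ∑ i ∈ Finset.range l, wval x (a + i)
          ≤ ∑ _i ∈ Finset.range l, (q-1) :=
            Finset.sum_le_sum (fun i _ => wval_le (by omega) x (a+i))
        _ = (q-1) * l := by rw [Finset.sum_const, Finset.card_range]; ring
    calc (W a l : ℝ) ≤ ((q-1) * l : ℕ) := by exact_mod_cast this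
      _ = ((q:ℝ)-1) * l := by push_cast [Nat.cast_sub (by omega : 1 ≤ q)]; ring
  have hxW : ∀ a, a + ℓ₁ ≤ n →
      (((q : ℝ) - 1) / 2 - η₁) * (ℓ₁ : ℝ) ≤ (W a ℓ₁ : ℝ) ∧
      (W a ℓ₁ : ℝ) ≤ (((q : ℝ) - 1) / 2 + η₁) * (ℓ₁ : ℝ) := by
    intro a ha
    have := hx a ha
    rwa [wsub_eq_sum x a ℓ₁ ha] at this
  -- bounds on unions of k consecutive blocks
  have hblocks : ∀ k a, a + ℓ₁ * k ≤ n →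
      (((q : ℝ) - 1) / 2 - η₁) * ((ℓ₁ * k : ℕ) : ℝ) ≤ (W a (ℓ₁ * k) : ℝ) ∧
      (W a (ℓ₁ * k) : ℝ) ≤ (((q : ℝ) - 1) / 2 + η₁) * ((ℓ₁ * k : ℕ) : ℝ) := by
    intro k
    induction k with
    | zero => intro a _; simp [hW]
    | succ k ih =>
      intro a ha
      have h1 : a + ℓ₁ * k ≤ n := by nlinarith [Nat.mul_le_mul_left ℓ₁ (Nat.le_succ k)]
      have h2 : (a + ℓ₁ * k) + ℓ₁ ≤ n := by
        have : ℓ₁ * (k+1) = ℓ₁ * k + ℓ₁ := by ring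
        omega
      have hik := ih a h1
      have hxk := hxW (a + ℓ₁ * k) h2
      have hsplit : W a (ℓ₁ * (k+1)) = W a (ℓ₁ * k) + W (a + ℓ₁ * k) ℓ₁ := by
        rw [show ℓ₁ * (k+1) = ℓ₁ * k + ℓ₁ by ring, hWadd]
      rw [hsplit]
      push_cast at hik hxk ⊢
      constructor <;> linarith [hik.1, hik.2, hxk.1, hxk.2]
  -- main proof
  unfold StrongLB
  intro a len hlen h
  rw [wsub_eq_sum x a len h]
  have hlenℓ₁ : ℓ₁ ≤ len := le_trans hℓ₁ℓ (le_trans hlen (le_refl len))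
  set k := len / ℓ₁ with hk
  set r := len % ℓ₁ with hr
  have hkr : ℓ₁ * k + r = len := Nat.div_add_mod len ℓ₁
  have hrlt : r < ℓ₁ := Nat.mod_lt _ (by omega)
  -- decomposition of the window
  have hsplit : W a len = W a (ℓ₁ * k) + W (a + ℓ₁ * k) r := by
    rw [← hkr, hWadd]
  -- blocks bound
  have hB := hblocks k a (by omega)
  -- final ℓ₁-window
  set b := a + len - ℓ₁ with hb
  have hbn : b + ℓ₁ ≤ n := by omega
  have hF := hxW b hbn
  have hFsplit : W b ℓ₁ = W b (ℓ₁ - r) + W (a + ℓ₁ * k) r := by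
    have h1 : ℓ₁ = (ℓ₁ - r) + r := by omega
    have h2 : b + (ℓ₁ - r) = a + ℓ₁ * k := by omega
    rw [h1, hWadd, h2, ← h1]
  -- real versions
  have hlenR : (len : ℝ) = (ℓ₁ : ℝ) * (k : ℝ) + (r : ℝ) := by
    rw [← hkr]; push_cast; ring
  have hkl : ((ℓ₁ * k : ℕ) : ℝ) = (ℓ₁:ℝ) * (k:ℝ) := by push_cast; ring
  have hBR : (W a len : ℝ) = (W a (ℓ₁*k) : ℝ) + (W (a + ℓ₁*k) r : ℝ) := by
    rw [hsplit]; push_cast; ring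
  have hRle : (W (a + ℓ₁*k) r : ℝ) ≤ ((q:ℝ)-1) * (r:ℝ) := hWle _ _
  have hR0 : (0:ℝ) ≤ (W (a + ℓ₁*k) r : ℝ) := by positivity
  have hFR : (W b ℓ₁ : ℝ) = (W b (ℓ₁ - r) : ℝ) + (W (a + ℓ₁*k) r : ℝ) := by
    rw [hFsplit]; push_cast; ring
  have hcompl : (W b (ℓ₁ - r) : ℝ) ≤ ((q:ℝ)-1) * ((ℓ₁:ℝ) - (r:ℝ)) := by
    have := hWle b (ℓ₁ - r)
    have hc : ((ℓ₁ - r : ℕ) : ℝ) = (ℓ₁:ℝ) - (r:ℝ) := by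
      push_cast [Nat.cast_sub (le_of_lt hrlt)]; ring
    rwa [hc] at this
  have hsL : s * (ℓ₁:ℝ) ≤ (len:ℝ) := by
    have h1 : (ℓ:ℝ) ≤ (len:ℝ) := by exact_mod_cast hlen
    linarith
  have hrR : (r:ℝ) < (ℓ₁:ℝ) := by exact_mod_cast hrlt
  have hr0 : (0:ℝ) ≤ (r:ℝ) := by positivity
  have hB1 : (((q:ℝ)-1)/2 - η₁) * ((ℓ₁:ℝ) * (k:ℝ)) ≤ (W a (ℓ₁*k) : ℝ) := by
    have := hB.1; rwa [hkl] at this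
  have hB2 : (W a (ℓ₁*k) : ℝ) ≤ (((q:ℝ)-1)/2 + η₁) * ((ℓ₁:ℝ) * (k:ℝ)) := by
    have := hB.2; rwa [hkl] at this
  have hcompl0 : (0:ℝ) ≤ (W b (ℓ₁ - r) : ℝ) := by positivity
  have hF1 := hF.1
  have hF2 := hF.2
  have hRF : (W (a + ℓ₁*k) r : ℝ) ≤ (((q:ℝ)-1)/2 + η₁) * (ℓ₁:ℝ) := by
    linarith [hcompl0, hFR, hF2]
  have hRlow : ((q:ℝ)-1) * (r:ℝ) - (((q:ℝ)-1)/2 + η₁) * (ℓ₁:ℝ) ≤ (W (a + ℓ₁*k) r : ℝ) := by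
    linarith [hcompl, hFR, hF1]
  have hEmul : 0 ≤ (η₂ - η₁) * (((q:ℝ)-1) * (((ℓ₁:ℝ) * (k:ℝ) + (r:ℝ)) - s * (ℓ₁:ℝ))) := by
    apply mul_nonneg hE0
    apply mul_nonneg (le_of_lt hQ)
    rw [← hlenR]; linarith
  have hkeyL : (((q:ℝ)-1)^2/4 - η₁^2) * (ℓ₁:ℝ) ≤ (η₂ - η₁) * (((q:ℝ)-1) * s) * (ℓ₁:ℝ) :=
    mul_le_mul_of_nonneg_right key (le_of_lt hL0)
  have hcm : (0:ℝ) < ((q:ℝ)-1)/2 - η₁ := by linarith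
  have hcp : (0:ℝ) < ((q:ℝ)-1)/2 + η₁ := by linarith
  rw [hBR, hlenR]
  constructor
  · -- lower bound
    have main : ((q:ℝ)-1) * ((((q:ℝ)-1)/2 - η₂) * ((ℓ₁:ℝ) * (k:ℝ) + (r:ℝ))) ≤
        ((q:ℝ)-1) * ((W a (ℓ₁*k) : ℝ) + (W (a + ℓ₁*k) r : ℝ)) := by
      have t1 := mul_le_mul_of_nonneg_left hB1 (le_of_lt hQ)
      have t2 := mul_le_mul_of_nonneg_left hRlow (le_of_lt hcm)
      have t3 := mul_le_mul_of_nonneg_left hR0 (le_of_lt hcp)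
      linarith [t1, t2, t3, hkeyL, hEmul]
    have := (mul_le_mul_iff_right₀ hQ).mp main
    linarith
  · -- upper bound
    have main : ((q:ℝ)-1) * ((W a (ℓ₁*k) : ℝ) + (W (a + ℓ₁*k) r : ℝ)) ≤
        ((q:ℝ)-1) * ((((q:ℝ)-1)/2 + η₂) * ((ℓ₁:ℝ) * (k:ℝ) + (r:ℝ))) := by
      have t1 := mul_le_mul_of_nonneg_left hB2 (le_of_lt hQ)
      have t2 := mul_le_mul_of_nonneg_left hRle (le_of_lt hcp)
      have t3 := mul_le_mul_of_nonneg_left hRF (le_of_lt hcm)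
      linarith [t1, t2, t3, hkeyL, hEmul]
    have := (mul_le_mul_iff_right₀ hQ).mp main
    linarith
end

section
/- Let q ≥ 2 be an integer and let 0 < ε₁ < ε₂ < (q−1)/2 be reals. Let m be an integer large enough that (ε₂ − ε₁)m ≥ (q−1)/2 − ε₁. Suppose u ∈ Σ_q^n is strong-(m−1,ε₁)-locally-balanced. Then for every symbol a ∈ Σ_q, both the sequence u a (u with a appended at the end) and the sequence a u (u with a prepended) are strong-(m,ε₂)-locally-balanced. -/
lemma wsub_snoc_lt {q n : ℕ} (u : Fin n → ZMod q) (a : ZMod q) (s len : ℕ)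
    (h : s + len ≤ n) (h' : s + len ≤ n + 1) :
    wsub (Fin.snoc u a) s len h' = wsub u s len h := by
  unfold wsub
  apply Finset.sum_congr rfl
  intro i _
  congr 1
  have he : (⟨s + (i : ℕ), by omega⟩ : Fin (n+1))
      = Fin.castSucc ⟨s + (i : ℕ), by omega⟩ := rfl
  rw [he, Fin.snoc_castSucc]

lemma wsub_snoc_end {q n : ℕ} (u : Fin n → ZMod q) (a : ZMod q) (s k : ℕ)
    (hsk : s + k = n) (h' : s + (k+1) ≤ n + 1) :
    wsub (Fin.snoc u a) s (k+1) h' = wsub u s k (by omega) + a.val := by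
  unfold wsub
  rw [Fin.sum_univ_castSucc]
  congr 1
  · apply Finset.sum_congr rfl
    intro i _
    congr 1
    have he : (⟨s + ((Fin.castSucc i) : ℕ), by omega⟩ : Fin (n+1))
        = Fin.castSucc ⟨s + (i : ℕ), by omega⟩ := rfl
    rw [he, Fin.snoc_castSucc]
  · have he : (⟨s + ((Fin.last k : Fin (k+1)) : ℕ), by omega⟩ : Fin (n+1)) = Fin.last n := by
      ext; simp [Fin.last]; omega
    rw [he, Fin.snoc_last]

lemma wsub_cons_shift {q n : ℕ} (u : Fin n → ZMod q) (a : ZMod q) (t len : ℕ)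
    (h : t + len ≤ n) (h' : (t+1) + len ≤ n + 1) :
    wsub (Fin.cons a u) (t+1) len h' = wsub u t len h := by
  unfold wsub
  apply Finset.sum_congr rfl
  intro i _
  congr 1
  have he : (⟨t + 1 + (i : ℕ), by omega⟩ : Fin (n+1))
      = Fin.succ ⟨t + (i : ℕ), by omega⟩ := by
    ext; simp [Fin.succ]; omega
  rw [he, Fin.cons_succ]

lemma wsub_cons_zero {q n : ℕ} (u : Fin n → ZMod q) (a : ZMod q) (k : ℕ)
    (h : 0 + k ≤ n) (h' : 0 + (k+1) ≤ n + 1) :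
    wsub (Fin.cons a u) 0 (k+1) h' = a.val + wsub u 0 k h := by
  unfold wsub
  rw [Fin.sum_univ_succ]
  congr 1

lemma ext_bounds (q : ℕ) (ε₁ ε₂ : ℝ) (m len : ℕ)
    (hε₁₂ : ε₁ < ε₂)
    (hm : ((q : ℝ) - 1) / 2 - ε₁ ≤ (ε₂ - ε₁) * (m : ℝ))
    (hlen : m ≤ len) (W A : ℝ)
    (hA0 : 0 ≤ A) (hA1 : A ≤ (q : ℝ) - 1)
    (hlo : (((q : ℝ) - 1) / 2 - ε₁) * ((len : ℝ) - 1) ≤ W)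
    (hhi : W ≤ (((q : ℝ) - 1) / 2 + ε₁) * ((len : ℝ) - 1)) :
    (((q : ℝ) - 1) / 2 - ε₂) * (len : ℝ) ≤ W + A ∧
    W + A ≤ (((q : ℝ) - 1) / 2 + ε₂) * (len : ℝ) := by
  have hml : (m : ℝ) ≤ (len : ℝ) := by exact_mod_cast hlen
  have key : ((q : ℝ) - 1) / 2 - ε₁ ≤ (ε₂ - ε₁) * (len : ℝ) := by
    calc ((q : ℝ) - 1) / 2 - ε₁ ≤ (ε₂ - ε₁) * (m : ℝ) := hm
      _ ≤ (ε₂ - ε₁) * (len : ℝ) := by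
        apply mul_le_mul_of_nonneg_left hml (by linarith)
  constructor <;> nlinarith

theorem stmt17 (q : ℕ) (hq : 2 ≤ q) (ε₁ ε₂ : ℝ)
    (hε₁0 : 0 < ε₁) (hε₁₂ : ε₁ < ε₂) (hε₂ : ε₂ < ((q : ℝ) - 1) / 2)
    (m : ℕ) (hm : ((q : ℝ) - 1) / 2 - ε₁ ≤ (ε₂ - ε₁) * (m : ℝ))
    (n : ℕ) (u : Fin n → ZMod q) (hu : StrongLB u (m - 1) ε₁) (a : ZMod q) :
    StrongLB (Fin.snoc u a) m ε₂ ∧ StrongLB (Fin.cons a u) m ε₂ := by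
  have hq0 : (q : ℕ) ≠ 0 := by omega
  haveI : NeZero q := ⟨hq0⟩
  have hm1 : 1 ≤ m := by
    by_contra hc
    have : m = 0 := by omega
    rw [this] at hm
    simp at hm
    linarith
  have hAv : (a.val : ℝ) ≤ (q : ℝ) - 1 := by
    have := ZMod.val_lt a
    have : a.val ≤ q - 1 := by omega
    have h2 : (a.val : ℝ) ≤ ((q - 1 : ℕ) : ℝ) := by exact_mod_cast this
    have h3 : ((q - 1 : ℕ) : ℝ) = (q : ℝ) - 1 := by
      push_cast [Nat.cast_sub (by omega : 1 ≤ q)]; ring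
    linarith
  constructor
  · intro s len hlen h
    rcases Nat.lt_or_ge (s + len) (n + 1) with hc | hc
    · have h2 : s + len ≤ n := by omega
      rw [wsub_snoc_lt u a s len h2 h]
      obtain ⟨hlo, hhi⟩ := hu s len (by omega) h2
      have hl0 : (0 : ℝ) ≤ (len : ℝ) := by positivity
      constructor <;> nlinarith
    · -- s + len = n + 1
      obtain ⟨k, rfl⟩ : ∃ k, len = k + 1 := ⟨len - 1, by omega⟩
      have hsk : s + k = n := by omega
      rw [wsub_snoc_end u a s k hsk h]
      obtain ⟨hlo, hhi⟩ := hu s k (by omega) (by omega)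
      have hcast : ((k : ℝ)) = ((k+1 : ℕ) : ℝ) - 1 := by push_cast; ring
      rw [hcast] at hlo hhi
      have := ext_bounds q ε₁ ε₂ m (k+1) hε₁₂ hm (by omega)
        (wsub u s k (by omega) : ℝ) (a.val : ℝ) (by positivity) hAv hlo hhi
      push_cast
      push_cast at this
      exact this
  · intro s len hlen h
    rcases Nat.eq_zero_or_pos s with rfl | hs
    · obtain ⟨k, rfl⟩ : ∃ k, len = k + 1 := ⟨len - 1, by omega⟩
      have hk : 0 + k ≤ n := by omega
      rw [wsub_cons_zero u a k hk h]
      obtain ⟨hlo, hhi⟩ := hu 0 k (by omega) hk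
      have hcast : ((k : ℝ)) = ((k+1 : ℕ) : ℝ) - 1 := by push_cast; ring
      rw [hcast] at hlo hhi
      have := ext_bounds q ε₁ ε₂ m (k+1) hε₁₂ hm (by omega)
        (wsub u 0 k hk : ℝ) (a.val : ℝ) (by positivity) hAv hlo hhi
      push_cast
      push_cast at this
      constructor <;> linarith [this.1, this.2]
    · obtain ⟨t, rfl⟩ : ∃ t, s = t + 1 := ⟨s - 1, by omega⟩
      have ht : t + len ≤ n := by omega
      rw [wsub_cons_shift u a t len ht h]
      obtain ⟨hlo, hhi⟩ := hu t len (by omega) ht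
      have hl0 : (0 : ℝ) ≤ (len : ℝ) := by positivity
      constructor <;> nlinarith
end

section
/- Let q ≥ 2 be an integer and 0 < ε₀ < (q−1)/2. If m is an integer with m ≥ max{ 2q/(q−1), ((q−1)²/ε₀²)·ln m }, then the number of sequences y ∈ Σ_q^m whose L1-weight Sum(y) lies in the interval [((q−1)/2 − ε₀)m, ((q−1)/2 + ε₀)m] is at least q^{m−1}. -/
lemma sum_sq_sum (q : ℕ) [NeZero q] (c : ZMod q → ℝ) (hc : ∑ a, c a = 0) (k : ℕ) :
    (q : ℝ) * ∑ y : Fin k → ZMod q, (∑ i, c (y i)) ^ 2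
      = k * (q : ℝ) ^ k * (∑ a, (c a) ^ 2) := by
  induction k with
  | zero => simp
  | succ n ih =>
    have hsum : ∑ y : Fin (n + 1) → ZMod q, (∑ i, c (y i)) ^ 2
        = ∑ p : ZMod q × (Fin n → ZMod q), (c p.1 + ∑ i, c (p.2 i)) ^ 2 := by
      rw [← Equiv.sum_comp (Fin.consEquiv (fun _ : Fin (n + 1) => ZMod q))
        (fun y => (∑ i, c (y i)) ^ 2)]
      refine Finset.sum_congr rfl fun p _ => ?_
      congr 1
      simp [Fin.consEquiv, Fin.sum_univ_succ]
    rw [hsum, Fintype.sum_prod_type]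
    have expand : ∀ a : ZMod q, ∑ z : Fin n → ZMod q, (c a + ∑ i, c (z i)) ^ 2
        = (Fintype.card (Fin n → ZMod q) : ℝ) * (c a) ^ 2
          + 2 * c a * (∑ z : Fin n → ZMod q, ∑ i, c (z i))
          + ∑ z : Fin n → ZMod q, (∑ i, c (z i)) ^ 2 := by
      intro a
      have h1 : ∀ z : Fin n → ZMod q, (c a + ∑ i, c (z i)) ^ 2
          = (c a) ^ 2 + 2 * c a * (∑ i, c (z i)) + (∑ i, c (z i)) ^ 2 :=
        fun z => by ring
      simp only [h1]
      rw [Finset.sum_add_distrib, Finset.sum_add_distrib, Finset.sum_const,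
        ← Finset.mul_sum, nsmul_eq_mul, Finset.card_univ]
    simp only [expand]
    rw [Finset.sum_add_distrib, Finset.sum_add_distrib, ← Finset.mul_sum,
      ← Finset.sum_mul, ← Finset.mul_sum, hc, Finset.sum_const]
    simp only [mul_zero, zero_mul, add_zero, nsmul_eq_mul, Finset.card_univ, ZMod.card,
      Fintype.card_fun, Fintype.card_fin]
    push_cast
    linear_combination (q : ℝ) * ih

set_option maxHeartbeats 1000000 in
theorem stmt18 (q : ℕ) (hq : 2 ≤ q) (ε₀ : ℝ) (hε0 : 0 < ε₀) (hε : ε₀ < ((q : ℝ) - 1) / 2)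
    (m : ℕ) (hm1 : 2 * (q : ℝ) / ((q : ℝ) - 1) ≤ (m : ℝ))
    (hm2 : ((q : ℝ) - 1) ^ 2 / ε₀ ^ 2 * Real.log (m : ℝ) ≤ (m : ℝ)) :
    q ^ (m - 1) ≤ Nat.card {y : Fin m → ZMod q //
      (((q : ℝ) - 1) / 2 - ε₀) * (m : ℝ) ≤ (L1 y : ℝ) ∧
      (L1 y : ℝ) ≤ (((q : ℝ) - 1) / 2 + ε₀) * (m : ℝ)} := by
  classical
  haveI : NeZero q := ⟨by omega⟩
  have hq1 : (1 : ℝ) ≤ (q : ℝ) - 1 := by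
    have : (2 : ℝ) ≤ (q : ℝ) := by exact_mod_cast hq
    linarith
  -- m ≥ 3
  have hm3 : 3 ≤ m := by
    have h2 : (2 : ℝ) < (m : ℝ) := by
      have hlt : (2 : ℝ) < 2 * (q : ℝ) / ((q : ℝ) - 1) := by
        rw [lt_div_iff₀ (by linarith)]
        linarith
      linarith
    have : 2 < m := by exact_mod_cast h2
    omega
  have hmR : (0:ℝ) < (m : ℝ) := by
    have : (0:ℕ) < m := by omega
    exact_mod_cast this
  set c : ZMod q → ℝ := fun a => (a.val : ℝ) - ((q : ℝ) - 1) / 2 with hcdef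
  -- sum over ZMod q equals sum over range q
  have key : ∀ g : ℕ → ℝ, ∑ a : ZMod q, g a.val = ∑ i ∈ Finset.range q, g i := by
    intro g
    refine Finset.sum_nbij' (fun a => a.val) (fun i => (i : ZMod q)) ?_ ?_ ?_ ?_ ?_
    · intro a _; exact Finset.mem_range.mpr (ZMod.val_lt a)
    · intro i _; exact Finset.mem_univ _
    · intro a _; exact ZMod.natCast_rightInverse a
    · intro i hi; exact ZMod.val_natCast_of_lt (Finset.mem_range.mp hi)
    · intro a _; rfl
  have hgauss : ∑ i ∈ Finset.range q, (i : ℝ) = (q : ℝ) * ((q : ℝ) - 1) / 2 := by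
    have h := Finset.sum_range_id_mul_two q
    have hc2 : ((∑ i ∈ Finset.range q, i : ℕ) : ℝ) * 2 = (q : ℝ) * ((q : ℝ) - 1) := by
      have : (((∑ i ∈ Finset.range q, i) * 2 : ℕ) : ℝ) = ((q * (q - 1) : ℕ) : ℝ) := by
        exact_mod_cast congrArg (Nat.cast : ℕ → ℝ) h
      rw [Nat.cast_mul, Nat.cast_mul, Nat.cast_sub (by omega : 1 ≤ q)] at this
      push_cast at this ⊢
      linarith
    have hcast : ∑ i ∈ Finset.range q, (i : ℝ)
        = ((∑ i ∈ Finset.range q, i : ℕ) : ℝ) := by push_cast; rfl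
    rw [hcast]; linarith
  have hc : ∑ a : ZMod q, c a = 0 := by
    have hk := key (fun v => (v : ℝ) - ((q : ℝ) - 1) / 2)
    simp only [hcdef]
    rw [hk, Finset.sum_sub_distrib, Finset.sum_const, Finset.card_range, nsmul_eq_mul,
      hgauss]
    ring
  have hVb : ∑ a : ZMod q, (c a) ^ 2 ≤ (q : ℝ) * (((q : ℝ) - 1) / 2) ^ 2 := by
    have hpt : ∀ a ∈ (Finset.univ : Finset (ZMod q)),
        (c a) ^ 2 ≤ (((q : ℝ) - 1) / 2) ^ 2 := by
      intro a _
      have h1 : (a.val : ℝ) ≤ (q : ℝ) - 1 := by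
        have := ZMod.val_lt a
        have h2 : a.val ≤ q - 1 := by omega
        have h3 : ((a.val : ℕ) : ℝ) ≤ ((q - 1 : ℕ) : ℝ) := by exact_mod_cast h2
        rwa [Nat.cast_sub (by omega : 1 ≤ q), Nat.cast_one] at h3
      have h0 : (0 : ℝ) ≤ (a.val : ℝ) := Nat.cast_nonneg _
      simp only [hcdef]
      nlinarith
    calc ∑ a : ZMod q, (c a) ^ 2
        ≤ Finset.univ.card • (((q : ℝ) - 1) / 2) ^ 2 :=
          Finset.sum_le_card_nsmul _ _ _ hpt
      _ = (q : ℝ) * (((q : ℝ) - 1) / 2) ^ 2 := by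
          rw [nsmul_eq_mul, Finset.card_univ, ZMod.card]
  -- relate f to L1
  have hf : ∀ y : Fin m → ZMod q,
      ∑ i, c (y i) = (L1 y : ℝ) - ((q : ℝ) - 1) / 2 * m := by
    intro y
    simp only [hcdef, Finset.sum_sub_distrib, Finset.sum_const, Finset.card_univ,
      Fintype.card_fin, nsmul_eq_mul, L1]
    push_cast
    ring
  -- log bound
  have hlogm : 1 ≤ Real.log m := by
    have h3 : (3 : ℝ) ≤ (m : ℝ) := by exact_mod_cast hm3
    have hexp : Real.exp 1 ≤ 3 := by
      have := Real.exp_one_lt_d9; linarith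
    calc (1 : ℝ) = Real.log (Real.exp 1) := (Real.log_exp 1).symm
      _ ≤ Real.log 3 := Real.log_le_log (Real.exp_pos 1) hexp
      _ ≤ Real.log m := Real.log_le_log (by norm_num) h3
  have hlog : ((q : ℝ) - 1) ^ 2 ≤ ε₀ ^ 2 * m := by
    have h1 : ((q : ℝ) - 1) ^ 2 / ε₀ ^ 2 ≤ (m : ℝ) := by
      have hnn : 0 ≤ ((q : ℝ) - 1) ^ 2 / ε₀ ^ 2 := by positivity
      nlinarith [hm2]
    rw [div_le_iff₀ (by positivity : (0:ℝ) < ε₀ ^ 2)] at h1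
    linarith [h1]
  -- set up counting
  set P : (Fin m → ZMod q) → Prop := fun y =>
    (((q : ℝ) - 1) / 2 - ε₀) * (m : ℝ) ≤ (L1 y : ℝ) ∧
      (L1 y : ℝ) ≤ (((q : ℝ) - 1) / 2 + ε₀) * (m : ℝ) with hPdef
  have hNat : Nat.card {y : Fin m → ZMod q // P y}
      = (Finset.univ.filter P).card := by
    rw [Nat.card_eq_fintype_card, Fintype.card_subtype]
  set G := Finset.univ.filter P with hGdef
  set B := Finset.univ.filter (fun y => ¬ P y) with hBdef
  have hGB : G.card + B.card = q ^ m := by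
    rw [hGdef, hBdef, Finset.card_filter_add_card_filter_not,
      Finset.card_univ, Fintype.card_fun, Fintype.card_fin, ZMod.card]
  have hBbound : ∀ y ∈ B, (ε₀ * m) ^ 2 ≤ (∑ i, c (y i)) ^ 2 := by
    intro y hy
    have hy' : ¬ P y := (Finset.mem_filter.mp hy).2
    rw [hf y]
    rw [hPdef] at hy'
    rcases not_and_or.mp hy' with h | h
    · push_neg at h
      nlinarith [mul_pos hε0 hmR,
        sq_nonneg ((L1 y : ℝ) - ((q : ℝ) - 1) / 2 * (m : ℝ) + ε₀ * (m : ℝ))]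
    · push_neg at h
      nlinarith [mul_pos hε0 hmR,
        sq_nonneg ((L1 y : ℝ) - ((q : ℝ) - 1) / 2 * (m : ℝ) - ε₀ * (m : ℝ))]
  have hsumB : (B.card : ℝ) * (ε₀ * m) ^ 2
      ≤ ∑ y : Fin m → ZMod q, (∑ i, c (y i)) ^ 2 := by
    calc (B.card : ℝ) * (ε₀ * m) ^ 2 = ∑ _y ∈ B, (ε₀ * m) ^ 2 := by
          rw [Finset.sum_const, nsmul_eq_mul]
      _ ≤ ∑ y ∈ B, (∑ i, c (y i)) ^ 2 := Finset.sum_le_sum hBbound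
      _ ≤ ∑ y : Fin m → ZMod q, (∑ i, c (y i)) ^ 2 :=
          Finset.sum_le_sum_of_subset_of_nonneg (Finset.subset_univ B)
            (fun y _ _ => sq_nonneg _)
  have hT := sum_sq_sum q c hc m
  set A : ℝ := (q : ℝ) ^ m with hAdef
  have hA0 : (0 : ℝ) < A := by positivity
  have hqR : (2 : ℝ) ≤ (q : ℝ) := by exact_mod_cast hq
  have hprod : (B.card : ℝ) * ((q : ℝ) * ε₀ ^ 2 * (m : ℝ) ^ 2)
      ≤ (A / 4) * ((q : ℝ) * ε₀ ^ 2 * (m : ℝ) ^ 2) := by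
    calc (B.card : ℝ) * ((q : ℝ) * ε₀ ^ 2 * (m : ℝ) ^ 2)
        = (q : ℝ) * ((B.card : ℝ) * (ε₀ * m) ^ 2) := by ring
      _ ≤ (q : ℝ) * ∑ y : Fin m → ZMod q, (∑ i, c (y i)) ^ 2 :=
          mul_le_mul_of_nonneg_left hsumB (by positivity)
      _ = (m : ℝ) * (q : ℝ) ^ m * (∑ a : ZMod q, (c a) ^ 2) := hT
      _ ≤ (m : ℝ) * (q : ℝ) ^ m * ((q : ℝ) * (((q : ℝ) - 1) / 2) ^ 2) :=
          mul_le_mul_of_nonneg_left hVb (by positivity)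
      _ ≤ (m : ℝ) * (q : ℝ) ^ m * ((q : ℝ) * (ε₀ ^ 2 * (m : ℝ)) / 4) := by
          apply mul_le_mul_of_nonneg_left _ (by positivity)
          have h := mul_le_mul_of_nonneg_left hlog
            (by positivity : (0:ℝ) ≤ (q:ℝ) / 4)
          linarith [h]
      _ = (A / 4) * ((q : ℝ) * ε₀ ^ 2 * (m : ℝ) ^ 2) := by rw [hAdef]; ring
  have hBle : (B.card : ℝ) ≤ A / 4 :=
    le_of_mul_le_mul_right hprod (by positivity)
  have hGr : (G.card : ℝ) + (B.card : ℝ) = A := by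
    have : ((G.card + B.card : ℕ) : ℝ) = ((q ^ m : ℕ) : ℝ) := by exact_mod_cast hGB
    push_cast at this
    rw [hAdef]
    linarith
  rw [hNat]
  have hfin : ((q ^ (m - 1) : ℕ) : ℝ) ≤ (G.card : ℝ) := by
    have hpow : (q : ℝ) ^ (m - 1) * (q : ℝ) = A := by
      rw [hAdef, ← pow_succ]
      congr 1
      omega
    have hp0 : (0 : ℝ) ≤ (q : ℝ) ^ (m - 1) := by positivity
    have hcast : ((q ^ (m - 1) : ℕ) : ℝ) = (q : ℝ) ^ (m - 1) := by push_cast; rfl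
    rw [hcast]
    nlinarith [mul_nonneg hp0 (by linarith : (0:ℝ) ≤ (q : ℝ) - 2)]
  exact_mod_cast hfin
end
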